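/- arXiv:2406.17395 — 4 statements merged into one kernel-verified Lean document; each statement's English description precedes it below -/
import Mathlib

section
/- Let Γ ∈ 𝒢₃(θ0,θ1,θ2). Then θ1 ≥ 0 and θ2 ≤ −√2. -/
/-- `θ` is an eigenvalue of the (real) adjacency matrix of `G`. -/
def adjEig {V : Type} [Fintype V] [DecidableEq V] (G : SimpleGraph V) [DecidableRel G.Adj]
    (θ : ℝ) : Prop :=
  ∃ f : V → ℝ, f ≠ 0 ∧ (SimpleGraph.adjMatrix ℝ G).mulVec f = θ • f

/-- `Γ ∈ 𝒢₃(θ0,θ1,θ2)`: `Γ` is connected and the set of eigenvalues of its adjacency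
matrix is exactly `{θ0, θ1, θ2}`, where `θ0 > θ1 > θ2`. -/
def InG3 {V : Type} [Fintype V] [DecidableEq V] (G : SimpleGraph V) [DecidableRel G.Adj]
    (θ0 θ1 θ2 : ℝ) : Prop :=
  G.Connected ∧ θ1 < θ0 ∧ θ2 < θ1 ∧ {θ : ℝ | adjEig G θ} = {θ0, θ1, θ2}

namespace Stmt1Aux
open Matrix SimpleGraph

set_option linter.unusedSectionVars false

variable {V : Type} [Fintype V] [DecidableEq V]

lemma dot_sum {ι : Type*} (x : V → ℝ) (s : Finset ι) (f : ι → V → ℝ) :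
    x ⬝ᵥ (∑ i ∈ s, f i) = ∑ i ∈ s, x ⬝ᵥ f i := by
  simp only [dotProduct, Finset.sum_apply, Finset.mul_sum]
  exact Finset.sum_comm

section abstractSpectral
variable (A : Matrix V V ℝ) (B : V → (V → ℝ)) (μ : V → ℝ)

lemma parseval (hspan : ∀ x : V → ℝ, x = ∑ i, (B i ⬝ᵥ x) • B i) (x y : V → ℝ) :
    x ⬝ᵥ y = ∑ i, (B i ⬝ᵥ x) * (B i ⬝ᵥ y) := by
  conv_lhs => rw [hspan y]
  rw [dot_sum]
  refine Finset.sum_congr rfl fun i _ => ?_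
  rw [dotProduct_smul, smul_eq_mul, dotProduct_comm x (B i), mul_comm]

lemma keyrel (hsym : Aᵀ = A) (heig : ∀ i, A *ᵥ B i = μ i • B i) (x : V → ℝ) (i : V) :
    B i ⬝ᵥ (A *ᵥ x) = μ i * (B i ⬝ᵥ x) := by
  rw [dotProduct_mulVec, ← hsym, vecMul_transpose, heig i, smul_dotProduct, smul_eq_mul]

lemma quadform (hsym : Aᵀ = A) (heig : ∀ i, A *ᵥ B i = μ i • B i)
    (hspan : ∀ x : V → ℝ, x = ∑ i, (B i ⬝ᵥ x) • B i) (x : V → ℝ) :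
    x ⬝ᵥ (A *ᵥ x) = ∑ i, μ i * (B i ⬝ᵥ x) ^ 2 := by
  rw [parseval B hspan x (A *ᵥ x)]
  refine Finset.sum_congr rfl fun i _ => ?_
  rw [keyrel A B μ hsym heig]; ring

lemma norm_sq (hspan : ∀ x : V → ℝ, x = ∑ i, (B i ⬝ᵥ x) • B i) (x : V → ℝ) :
    x ⬝ᵥ x = ∑ i, (B i ⬝ᵥ x) ^ 2 := by
  rw [parseval B hspan x x]
  exact Finset.sum_congr rfl fun i _ => (pow_two _).symm

lemma eig_exists_index (hsym : Aᵀ = A) (heig : ∀ i, A *ᵥ B i = μ i • B i)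
    (hspan : ∀ x : V → ℝ, x = ∑ i, (B i ⬝ᵥ x) • B i)
    {θ : ℝ} {f : V → ℝ} (hf : f ≠ 0) (hef : A *ᵥ f = θ • f) :
    ∃ i, μ i = θ := by
  have hc : ∃ i, B i ⬝ᵥ f ≠ 0 := by
    by_contra hc
    push_neg at hc
    apply hf
    rw [hspan f]
    simp only [hc, zero_smul]
    simp
  obtain ⟨i, hi⟩ := hc
  refine ⟨i, ?_⟩
  have h1 : B i ⬝ᵥ (A *ᵥ f) = μ i * (B i ⬝ᵥ f) := keyrel A B μ hsym heig f i
  rw [hef, dotProduct_smul, smul_eq_mul] at h1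
  exact (mul_right_cancel₀ hi h1).symm

lemma rayleigh_lower (hsym : Aᵀ = A) (heig : ∀ i, A *ᵥ B i = μ i • B i)
    (hspan : ∀ x : V → ℝ, x = ∑ i, (B i ⬝ᵥ x) • B i)
    {m : ℝ} (hm : ∀ i, m ≤ μ i) (x : V → ℝ) :
    m * (x ⬝ᵥ x) ≤ x ⬝ᵥ (A *ᵥ x) := by
  rw [quadform A B μ hsym heig hspan, norm_sq B hspan, Finset.mul_sum]
  refine Finset.sum_le_sum fun i _ => ?_
  have h1 := sq_nonneg (B i ⬝ᵥ x)
  have h2 := hm i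
  nlinarith

lemma rayleigh_upper (hsym : Aᵀ = A) (heig : ∀ i, A *ᵥ B i = μ i • B i)
    (hspan : ∀ x : V → ℝ, x = ∑ i, (B i ⬝ᵥ x) • B i)
    {t : ℝ} (ht : ∀ i, μ i ≤ t) (x : V → ℝ) :
    x ⬝ᵥ (A *ᵥ x) ≤ t * (x ⬝ᵥ x) := by
  rw [quadform A B μ hsym heig hspan, norm_sq B hspan, Finset.mul_sum]
  refine Finset.sum_le_sum fun i _ => ?_
  have h1 := sq_nonneg (B i ⬝ᵥ x)
  have h2 := ht i
  nlinarith

lemma equality_case (hsym : Aᵀ = A) (heig : ∀ i, A *ᵥ B i = μ i • B i)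
    (hspan : ∀ x : V → ℝ, x = ∑ i, (B i ⬝ᵥ x) • B i)
    {t : ℝ} (ht : ∀ i, μ i ≤ t) {x : V → ℝ} (hq : x ⬝ᵥ (A *ᵥ x) = t * (x ⬝ᵥ x)) :
    A *ᵥ x = t • x := by
  have h1 := quadform A B μ hsym heig hspan x
  have h2 := norm_sq B hspan x
  have hsum : ∑ i, (t - μ i) * (B i ⬝ᵥ x) ^ 2 = 0 := by
    have e : ∑ i, (t - μ i) * (B i ⬝ᵥ x) ^ 2
        = t * (x ⬝ᵥ x) - x ⬝ᵥ (A *ᵥ x) := by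
      rw [h1, h2, Finset.mul_sum, ← Finset.sum_sub_distrib]
      exact Finset.sum_congr rfl fun i _ => by ring
    rw [e, hq, sub_self]
  have hzero : ∀ i, (t - μ i) * (B i ⬝ᵥ x) ^ 2 = 0 := by
    intro i
    refine (Finset.sum_eq_zero_iff_of_nonneg fun j _ => ?_).mp hsum i (Finset.mem_univ i)
    exact mul_nonneg (sub_nonneg.2 (ht j)) (sq_nonneg _)
  have hAx : A *ᵥ x = ∑ i, (B i ⬝ᵥ x) • (μ i • B i) := by
    conv_lhs => rw [hspan x]
    simp only [← Matrix.mulVecLin_apply, map_sum]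
    exact Finset.sum_congr rfl fun i _ => by
      rw [Matrix.mulVecLin_apply, mulVec_smul, heig i]
  rw [hAx]
  have : ∀ i ∈ Finset.univ, (B i ⬝ᵥ x) • (μ i • B i) = t • ((B i ⬝ᵥ x) • B i) := by
    intro i _
    rcases mul_eq_zero.mp (hzero i) with h | h
    · rw [show μ i = t by linarith [sub_eq_zero.mp h]]
      rw [smul_comm]
    · rw [pow_eq_zero_iff (two_ne_zero)] at h
      simp [h]
  rw [Finset.sum_congr rfl this, ← Finset.smul_sum, ← hspan]

end abstractSpectral


lemma exists_basis (G : SimpleGraph V) [DecidableRel G.Adj] :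
    ∃ (B : V → V → ℝ) (μ : V → ℝ),
      (∀ i, (G.adjMatrix ℝ) *ᵥ B i = μ i • B i) ∧
      (∀ i j, B i ⬝ᵥ B j = if i = j then 1 else 0) ∧
      (∀ x : V → ℝ, x = ∑ i, (B i ⬝ᵥ x) • B i) ∧
      (∑ i, μ i = 0) := by
  have hA : (G.adjMatrix ℝ).IsHermitian := by
    have := G.isSymm_adjMatrix (α := ℝ)
    rwa [Matrix.IsHermitian, conjTranspose_eq_transpose_of_trivial]
  refine ⟨fun i => ⇑(hA.eigenvectorBasis i), hA.eigenvalues,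
    fun i => hA.mulVec_eigenvectorBasis i, ?_, ?_, ?_⟩
  · intro i j
    have := (orthonormal_iff_ite.mp hA.eigenvectorBasis.orthonormal) i j
    simpa [PiLp.inner_apply, dotProduct, mul_comm] using this
  · intro x
    have h := hA.eigenvectorBasis.sum_repr' (WithLp.toLp 2 x : EuclideanSpace ℝ V)
    have h2 : ∀ i, (inner (𝕜 := ℝ) (hA.eigenvectorBasis i) (WithLp.toLp 2 x : EuclideanSpace ℝ V))
        = ⇑(hA.eigenvectorBasis i) ⬝ᵥ x := by
      intro i
      simp [PiLp.inner_apply, dotProduct, mul_comm]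
    simp only [h2] at h
    have h3 := congrArg (WithLp.ofLp (p := 2)) h
    simp only [WithLp.ofLp_sum, WithLp.ofLp_smul] at h3
    exact h3.symm
  · have h := hA.spectral_theorem
    have tr0 : Matrix.trace (G.adjMatrix ℝ) = 0 := by simp
    have h1 : Matrix.trace (G.adjMatrix ℝ)
        = Matrix.trace (diagonal (RCLike.ofReal ∘ hA.eigenvalues)) := by
      conv_lhs => rw [h]
      rw [Unitary.conjStarAlgAut_apply, Matrix.trace_mul_cycle, mem_unitaryGroup_iff'.mp (Matrix.IsHermitian.eigenvectorUnitary hA).2, one_mul]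
    rw [tr0, Matrix.trace_diagonal] at h1
    simpa using h1.symm

lemma exists_induced_path (G : SimpleGraph V) [DecidableRel G.Adj] (hconn : G.Connected)
    {a c : V} (hac : a ≠ c) (hnadj : ¬ G.Adj a c) :
    ∃ b w, G.Adj a b ∧ G.Adj b w ∧ ¬ G.Adj a w ∧ a ≠ w := by
  obtain ⟨p⟩ := hconn.preconnected a c
  obtain ⟨d, _, hdS, hdS'⟩ := p.exists_boundary_dart {v | v = a ∨ G.Adj a v}
    (Or.inl rfl) (by simp only [Set.mem_setOf_eq]; push_neg; exact ⟨hac.symm, hnadj⟩)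
  simp only [Set.mem_setOf_eq] at hdS hdS'
  push_neg at hdS'
  have hadj : G.Adj d.fst d.snd := d.adj
  rcases hdS with h | h
  · exact absurd (Or.inr (h ▸ hadj)) (by push_neg; exact hdS')
  · exact ⟨d.fst, d.snd, h, hadj, hdS'.2, Ne.symm hdS'.1⟩

lemma eig_of_complete (G : SimpleGraph V) [DecidableRel G.Adj]
    (hcomp : ∀ u v : V, u ≠ v → G.Adj u v) {θ : ℝ} (hθ : adjEig G θ) :
    θ = -1 ∨ θ = (Fintype.card V : ℝ) - 1 := by
  obtain ⟨f, hf0, hf⟩ := hθ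
  have key : ∀ v, (∑ u, f u) - f v = θ * f v := by
    intro v
    have h1 := congrFun hf v
    rw [adjMatrix_mulVec_apply] at h1
    have hnb : G.neighborFinset v = Finset.univ.erase v := by
      ext u
      simp only [mem_neighborFinset, Finset.mem_erase, Finset.mem_univ, and_true]
      exact ⟨fun h => (G.ne_of_adj h).symm, fun h => hcomp v u (Ne.symm h)⟩
    rw [hnb, Finset.sum_erase_eq_sub (Finset.mem_univ v)] at h1
    simpa using h1
  by_cases hθ1 : θ = -1
  · exact Or.inl hθ1
  · right
    have hne : θ + 1 ≠ 0 := fun h => hθ1 (by linarith)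
    have hfv : ∀ v, f v = (∑ u, f u) / (θ + 1) := by
      intro v
      have := key v
      field_simp
      linarith
    have hS : (∑ u, f u) ≠ 0 := by
      intro h0
      exact hf0 (funext fun v => by rw [hfv v, h0, zero_div]; rfl)
    have hsum : (∑ u, f u) = (Fintype.card V : ℝ) * ((∑ u, f u) / (θ + 1)) := by
      conv_lhs => rw [Finset.sum_congr rfl fun v _ => hfv v]
      rw [Finset.sum_const, Finset.card_univ, nsmul_eq_mul]
    field_simp at hsum
    have h2 : (∑ u, f u) * (θ + 1) = (∑ u, f u) * (Fintype.card V : ℝ) := by rw [hsum]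
    have h3 := mul_left_cancel₀ hS h2
    linarith


lemma walk_zero (G : SimpleGraph V) [DecidableRel G.Adj] (g : V → ℝ)
    (step : ∀ v u, G.Adj v u → g v = 0 → g u = 0) {x y : V} (p : G.Walk x y) (hx : g x = 0) :
    g y = 0 := by
  induction p with
  | nil => exact hx
  | cons h p ih => exact ih (step _ _ h hx)

lemma perron (G : SimpleGraph V) [DecidableRel G.Adj] (hconn : G.Connected)
    (B : V → V → ℝ) (μ : V → ℝ)
    (hsym : (G.adjMatrix ℝ)ᵀ = G.adjMatrix ℝ)
    (heig : ∀ i, (G.adjMatrix ℝ) *ᵥ B i = μ i • B i)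
    (hspan : ∀ x : V → ℝ, x = ∑ i, (B i ⬝ᵥ x) • B i)
    {t : ℝ} (htop : ∀ i, μ i ≤ t) (ht0 : 0 < t)
    {f : V → ℝ} (hf0 : f ≠ 0) (hf : (G.adjMatrix ℝ) *ᵥ f = t • f) :
    ∀ v, f v ≠ 0 := by
  set A := G.adjMatrix ℝ with hA
  set g : V → ℝ := fun v => |f v| with hg
  have hAnn : ∀ v u, (0:ℝ) ≤ A v u := by
    intro v u; rw [hA, adjMatrix_apply]; split <;> norm_num
  have hgg : g ⬝ᵥ g = f ⬝ᵥ f := by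
    simp only [dotProduct, hg, abs_mul_abs_self]
  have hff : f ⬝ᵥ (A *ᵥ f) = t * (f ⬝ᵥ f) := by rw [hf, dotProduct_smul, smul_eq_mul]
  have hmono : f ⬝ᵥ (A *ᵥ f) ≤ g ⬝ᵥ (A *ᵥ g) := by
    simp only [dotProduct, mulVec, Finset.mul_sum]
    refine Finset.sum_le_sum fun v _ => Finset.sum_le_sum fun u _ => ?_
    calc f v * (A v u * f u) ≤ |f v * (A v u * f u)| := le_abs_self _
      _ = g v * (A v u * g u) := by
          rw [hg, abs_mul, abs_mul, abs_of_nonneg (hAnn v u)]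
  have hq : g ⬝ᵥ (A *ᵥ g) = t * (g ⬝ᵥ g) :=
    le_antisymm (rayleigh_upper A B μ hsym heig hspan htop g)
      (by rw [hgg, ← hff]; exact hmono)
  have hgeig : A *ᵥ g = t • g := equality_case A B μ hsym heig hspan htop hq
  have step : ∀ v u, G.Adj v u → g v = 0 → g u = 0 := by
    intro v u hadj hv
    have h1 := congrFun hgeig v
    rw [hA, adjMatrix_mulVec_apply] at h1
    rw [Pi.smul_apply, smul_eq_mul, hv, mul_zero] at h1
    exact (Finset.sum_eq_zero_iff_of_nonneg (fun u' _ => by rw [hg]; exact abs_nonneg _)).mp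
      h1 u (by rw [mem_neighborFinset]; exact hadj)
  intro v hv
  obtain ⟨u, hu⟩ := Function.ne_iff.mp hf0
  obtain ⟨p⟩ := hconn.preconnected v u
  have h0 : g u = 0 := walk_zero G g step p (by rw [hg]; simpa using hv)
  rw [hg] at h0
  exact hu (abs_eq_zero.mp h0)

end Stmt1Aux

open Matrix SimpleGraph in
/-- If `Γ ∈ 𝒢₃(θ0,θ1,θ2)` then `θ1 ≥ 0` and `θ2 ≤ -√2`. -/
theorem stmt1 {V : Type} [Fintype V] [DecidableEq V] (G : SimpleGraph V) [DecidableRel G.Adj]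
    (θ0 θ1 θ2 : ℝ) (h : InG3 G θ0 θ1 θ2) :
    0 ≤ θ1 ∧ θ2 ≤ -Real.sqrt 2 := by
  obtain ⟨hconn, h01, h12, hset⟩ := h
  obtain ⟨B, μ, heig, horth, hspan, htrace⟩ := Stmt1Aux.exists_basis G
  have hsym : (SimpleGraph.adjMatrix ℝ G)ᵀ = SimpleGraph.adjMatrix ℝ G := G.isSymm_adjMatrix
  have hBne : ∀ i, B i ≠ 0 := by
    intro i h0
    have h1 := horth i i
    rw [h0] at h1
    simpa using h1
  have hadjeig : ∀ i, adjEig G (μ i) := fun i => ⟨B i, hBne i, heig i⟩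
  have hμ : ∀ i, μ i = θ0 ∨ μ i = θ1 ∨ μ i = θ2 := by
    intro i
    have hmem : μ i ∈ {θ : ℝ | adjEig G θ} := hadjeig i
    rw [hset] at hmem
    simpa using hmem
  have hθeig : ∀ θ, θ ∈ ({θ0, θ1, θ2} : Set ℝ) → adjEig G θ := by
    intro θ hθ
    have hmem : θ ∈ {θ : ℝ | adjEig G θ} := by rw [hset]; exact hθ
    exact hmem
  have hlow : ∀ i, θ2 ≤ μ i := by intro i; rcases hμ i with hh|hh|hh <;> rw [hh] <;> linarith
  have hup : ∀ i, μ i ≤ θ0 := by intro i; rcases hμ i with hh|hh|hh <;> rw [hh] <;> linarith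
  have hnc : ∃ a c : V, a ≠ c ∧ ¬ G.Adj a c := by
    by_contra hcon
    push_neg at hcon
    have k0 := Stmt1Aux.eig_of_complete G hcon (hθeig θ0 (by simp))
    have k1 := Stmt1Aux.eig_of_complete G hcon (hθeig θ1 (by simp))
    have k2 := Stmt1Aux.eig_of_complete G hcon (hθeig θ2 (by simp))
    rcases k0 with k0|k0 <;> rcases k1 with k1|k1 <;> rcases k2 with k2|k2 <;> linarith
  obtain ⟨a, c, hac, hnadj⟩ := hnc
  obtain ⟨b, w, hab, hbw, hnaw, haw⟩ := Stmt1Aux.exists_induced_path G hconn hac hnadj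
  have hnwa : ¬ G.Adj w a := fun hh => hnaw hh.symm
  constructor
  · -- `0 ≤ θ1`
    by_contra hneg
    push_neg at hneg
    obtain ⟨f2, hf2ne, hf2⟩ := hθeig θ2 (by simp)
    obtain ⟨i2, hi2⟩ := Stmt1Aux.eig_exists_index (SimpleGraph.adjMatrix ℝ G) B μ hsym heig
      hspan hf2ne hf2
    have hθ0pos : 0 < θ0 := by
      by_contra hle
      push_neg at hle
      have hlt : (∑ i, μ i) < ∑ _i : V, (0:ℝ) := by
        refine Finset.sum_lt_sum (fun i _ => ?_) ⟨i2, Finset.mem_univ _, ?_⟩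
        · rcases hμ i with hh|hh|hh <;> rw [hh] <;> linarith
        · rw [hi2]; linarith
      rw [htrace] at hlt
      simp at hlt
    classical
    set I0 : Finset V := Finset.univ.filter (fun i => μ i = θ0) with hI0def
    have hcard2 : 2 ≤ I0.card := by
      by_contra hlt2
      push_neg at hlt2
      have hcard1 : I0.card ≤ 1 := by omega
      obtain ⟨s, t, hst, hzero⟩ :
          ∃ s t : ℝ, ¬(s = 0 ∧ t = 0) ∧ ∀ i ∈ I0, s * B i a + t * B i w = 0 := by
        rcases Finset.eq_empty_or_nonempty I0 with hI | hI
        · exact ⟨1, 0, by norm_num,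
            fun i hi => absurd hi (by rw [hI]; exact Finset.notMem_empty i)⟩
        · have hone : I0.card = 1 := le_antisymm hcard1 (Finset.one_le_card.mpr hI)
          obtain ⟨i0, hi0⟩ := Finset.card_eq_one.mp hone
          by_cases hα : B i0 a = 0
          · refine ⟨1, 0, by norm_num, ?_⟩
            intro i hi
            rw [hi0, Finset.mem_singleton] at hi
            subst hi
            rw [hα]; ring
          · refine ⟨B i0 w, -(B i0 a), fun hc => hα (by have := hc.2; linarith), ?_⟩
            intro i hi
            rw [hi0, Finset.mem_singleton] at hi
            subst hi
            ring
      set x : V → ℝ := s • (Pi.single a 1 : V → ℝ) + t • (Pi.single w 1 : V → ℝ) with hxdef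
      have hdotr : ∀ y : V → ℝ, y ⬝ᵥ x = s * y a + t * y w := by
        intro y
        rw [hxdef, dotProduct_add, dotProduct_smul, dotProduct_smul,
          dotProduct_single, dotProduct_single, smul_eq_mul, smul_eq_mul,
          mul_one, mul_one]
      have hdotl : ∀ y : V → ℝ, x ⬝ᵥ y = s * y a + t * y w := by
        intro y
        rw [dotProduct_comm]
        exact hdotr y
      have hxa : x a = s := by
        rw [hxdef]
        simp [Pi.single_apply, haw]
      have hxw : x w = t := by
        rw [hxdef]
        simp [Pi.single_apply, Ne.symm haw]
      have hAxa : ((SimpleGraph.adjMatrix ℝ G) *ᵥ x) a = 0 := by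
        have e1 : ((SimpleGraph.adjMatrix ℝ G) *ᵥ x) a
            = s * (SimpleGraph.adjMatrix ℝ G) a a + t * (SimpleGraph.adjMatrix ℝ G) a w :=
          hdotr _
        rw [e1]
        simp [hnaw]
      have hAxw : ((SimpleGraph.adjMatrix ℝ G) *ᵥ x) w = 0 := by
        have e1 : ((SimpleGraph.adjMatrix ℝ G) *ᵥ x) w
            = s * (SimpleGraph.adjMatrix ℝ G) w a + t * (SimpleGraph.adjMatrix ℝ G) w w :=
          hdotr _
        rw [e1]
        simp [hnwa]
      have hqx : x ⬝ᵥ ((SimpleGraph.adjMatrix ℝ G) *ᵥ x) = 0 := by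
        rw [hdotl, hAxa, hAxw]; ring
      have hxx : x ⬝ᵥ x = s^2 + t^2 := by rw [hdotl x, hxa, hxw]; ring
      have hle : x ⬝ᵥ ((SimpleGraph.adjMatrix ℝ G) *ᵥ x) ≤ θ1 * (x ⬝ᵥ x) := by
        rw [Stmt1Aux.quadform _ B μ hsym heig hspan, Stmt1Aux.norm_sq B hspan, Finset.mul_sum]
        refine Finset.sum_le_sum fun i _ => ?_
        rcases hμ i with hh|hh|hh
        · have hiI : i ∈ I0 := by rw [hI0def]; simp [hh]
          have hc0 : B i ⬝ᵥ x = 0 := by rw [hdotr (B i)]; exact hzero i hiI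
          rw [hc0]
          simp
        · exact le_of_eq (by rw [hh])
        · rw [hh]
          exact mul_le_mul_of_nonneg_right (le_of_lt h12) (sq_nonneg _)
      have hxxpos : 0 < x ⬝ᵥ x := by
        rw [hxx]
        rcases not_and_or.mp hst with hs | ht <;> positivity
      nlinarith [hqx, hle, hxxpos, hneg]
    obtain ⟨i, hiI, j, hjI, hij⟩ := Finset.one_lt_card.mp (by omega : 1 < I0.card)
    have hμi : μ i = θ0 := (Finset.mem_filter.mp hiI).2
    have hμj : μ j = θ0 := (Finset.mem_filter.mp hjI).2
    have hBj := Stmt1Aux.perron G hconn B μ hsym heig hspan hup hθ0pos (hBne j)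
      (by rw [heig j, hμj])
    set k : V → ℝ := B j a • B i - B i a • B j with hkdef
    have hkeig : (SimpleGraph.adjMatrix ℝ G) *ᵥ k = θ0 • k := by
      rw [hkdef, Matrix.mulVec_sub, Matrix.mulVec_smul, Matrix.mulVec_smul,
        heig i, heig j, hμi, hμj]
      module
    have hka : k a = 0 := by rw [hkdef]; simp; ring
    by_cases hk : k = 0
    · have hd : B i ⬝ᵥ k = 0 := by rw [hk]; simp
      rw [hkdef, dotProduct_sub, dotProduct_smul, dotProduct_smul, horth i i, horth i j,
        if_pos rfl, if_neg hij] at hd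
      simp at hd
      exact hBj a hd
    · exact Stmt1Aux.perron G hconn B μ hsym heig hspan hup hθ0pos hk hkeig a hka
  · -- `θ2 ≤ -√2`
    have hba : b ≠ a := (G.ne_of_adj hab).symm
    have hbw' : b ≠ w := G.ne_of_adj hbw
    set x : V → ℝ := ((Pi.single a 1 : V → ℝ) + (Pi.single w 1 : V → ℝ)) - Real.sqrt 2 • (Pi.single b 1 : V → ℝ) with hxdef
    have hdotr : ∀ y : V → ℝ, y ⬝ᵥ x = y a + y w - Real.sqrt 2 * y b := by
      intro y
      rw [hxdef, dotProduct_sub, dotProduct_add, dotProduct_smul,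
        dotProduct_single, dotProduct_single, dotProduct_single,
        smul_eq_mul, mul_one, mul_one, mul_one]
    have hdotl : ∀ y : V → ℝ, x ⬝ᵥ y = y a + y w - Real.sqrt 2 * y b := by
      intro y
      rw [dotProduct_comm]
      exact hdotr y
    have hAab : (SimpleGraph.adjMatrix ℝ G) a b = 1 := by simp [hab]
    have hAwb : (SimpleGraph.adjMatrix ℝ G) w b = 1 := by simp [hbw.symm]
    have hAba : (SimpleGraph.adjMatrix ℝ G) b a = 1 := by simp [hab.symm]
    have hAbw : (SimpleGraph.adjMatrix ℝ G) b w = 1 := by simp [hbw]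
    have hAxa : ((SimpleGraph.adjMatrix ℝ G) *ᵥ x) a = -Real.sqrt 2 := by
      have e1 : ((SimpleGraph.adjMatrix ℝ G) *ᵥ x) a
          = (SimpleGraph.adjMatrix ℝ G) a a + (SimpleGraph.adjMatrix ℝ G) a w
            - Real.sqrt 2 * (SimpleGraph.adjMatrix ℝ G) a b := hdotr _
      rw [e1, hAab]
      simp [hnaw]
    have hAxw : ((SimpleGraph.adjMatrix ℝ G) *ᵥ x) w = -Real.sqrt 2 := by
      have e1 : ((SimpleGraph.adjMatrix ℝ G) *ᵥ x) w
          = (SimpleGraph.adjMatrix ℝ G) w a + (SimpleGraph.adjMatrix ℝ G) w w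
            - Real.sqrt 2 * (SimpleGraph.adjMatrix ℝ G) w b := hdotr _
      rw [e1, hAwb]
      simp [hnwa]
    have hAxb : ((SimpleGraph.adjMatrix ℝ G) *ᵥ x) b = 2 := by
      have e1 : ((SimpleGraph.adjMatrix ℝ G) *ᵥ x) b
          = (SimpleGraph.adjMatrix ℝ G) b a + (SimpleGraph.adjMatrix ℝ G) b w
            - Real.sqrt 2 * (SimpleGraph.adjMatrix ℝ G) b b := hdotr _
      rw [e1, hAba, hAbw]
      simp
      norm_num
    have hs2 : Real.sqrt 2 * Real.sqrt 2 = 2 := Real.mul_self_sqrt (by norm_num)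
    have hqx : x ⬝ᵥ ((SimpleGraph.adjMatrix ℝ G) *ᵥ x) = -4 * Real.sqrt 2 := by
      rw [hdotl, hAxa, hAxw, hAxb]
      ring
    have hxa : x a = 1 := by
      rw [hxdef]
      simp [Pi.single_apply, haw, (G.ne_of_adj hab)]
    have hxw : x w = 1 := by
      rw [hxdef]
      simp [Pi.single_apply, Ne.symm haw, Ne.symm hbw']
    have hxb : x b = -Real.sqrt 2 := by
      rw [hxdef]
      simp [Pi.single_apply, hba, hbw']
    have hxx : x ⬝ᵥ x = 4 := by
      rw [hdotl x, hxa, hxw, hxb]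
      linear_combination hs2
    have hray := Stmt1Aux.rayleigh_lower (SimpleGraph.adjMatrix ℝ G) B μ hsym heig hspan hlow x
    rw [hqx, hxx] at hray
    linarith
end

section
/- Let Γ ∈ 𝒢₃(θ0,θ1,θ2) with adjacency matrix A. Then there exists a function α from the vertex set of Γ to the real numbers with α_x > 0 for every vertex x, such that A·α = θ0·α, such that A² − (θ1+θ2)·A + θ1·θ2·I equals the rank-one matrix whose (x,y) entry is α_x·α_y, and such that for every vertex x the degree of x equals α_x² − θ1·θ2. -/
open Matrix SimpleGraph

section Aux

variable {V : Type} [Fintype V] [DecidableEq V]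

private lemma conj_sub_smul {U : Matrix V V ℝ} (hU1 : U * star U = 1) (d : V → ℝ) (c : ℝ) :
    U * Matrix.diagonal d * star U - c • (1 : Matrix V V ℝ)
      = U * Matrix.diagonal (fun i => d i - c) * star U := by
  have h1 : (Matrix.diagonal (fun i => d i - c) : Matrix V V ℝ)
      = Matrix.diagonal d - c • 1 := by
    ext i j
    by_cases hij : i = j <;>
      simp [Matrix.diagonal_apply, hij, Matrix.one_apply]
  rw [h1, Matrix.mul_sub, Matrix.sub_mul, Matrix.mul_smul, Matrix.smul_mul, Matrix.mul_one, hU1]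

private lemma conj_mul_conj {U : Matrix V V ℝ} (hU2 : star U * U = 1) (d e : V → ℝ) :
    (U * Matrix.diagonal d * star U) * (U * Matrix.diagonal e * star U)
      = U * Matrix.diagonal (fun i => d i * e i) * star U := by
  have hde : Matrix.diagonal d * Matrix.diagonal e
      = Matrix.diagonal (fun i => d i * e i) := by
    rw [Matrix.diagonal_mul_diagonal]
  calc (U * Matrix.diagonal d * star U) * (U * Matrix.diagonal e * star U)
      = U * (Matrix.diagonal d * ((star U * U) * (Matrix.diagonal e * star U))) := by
        simp only [Matrix.mul_assoc]
    _ = U * Matrix.diagonal (fun i => d i * e i) * star U := by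
        rw [hU2, Matrix.one_mul, ← Matrix.mul_assoc (Matrix.diagonal d), hde,
          ← Matrix.mul_assoc]

/-- zero entries of a nonnegative eigenvector spread along edges -/
private lemma zero_spread {G : SimpleGraph V} [DecidableRel G.Adj] {g : V → ℝ} {θ : ℝ}
    (hg0 : ∀ x, 0 ≤ g x) (heig : (G.adjMatrix ℝ) *ᵥ g = θ • g)
    {x y : V} (hxy : G.Adj x y) (hx : g x = 0) : g y = 0 := by
  have hsum : ∑ z, (G.adjMatrix ℝ) x z * g z = 0 := by
    have h1 : ((G.adjMatrix ℝ) *ᵥ g) x = θ * g x := by rw [heig]; rfl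
    rw [hx, mul_zero] at h1
    simpa [Matrix.mulVec, dotProduct] using h1
  have h0 : ∀ z ∈ Finset.univ, 0 ≤ (G.adjMatrix ℝ) x z * g z := by
    intro z _
    refine mul_nonneg ?_ (hg0 z)
    by_cases h : G.Adj x z <;> simp [h]
  have := (Finset.sum_eq_zero_iff_of_nonneg h0).mp hsum y (Finset.mem_univ y)
  simpa [SimpleGraph.adjMatrix_apply, hxy] using this

private lemma walk_zero {G : SimpleGraph V} [DecidableRel G.Adj] {g : V → ℝ} {θ : ℝ}
    (hg0 : ∀ x, 0 ≤ g x) (heig : (G.adjMatrix ℝ) *ᵥ g = θ • g)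
    {x y : V} (w : G.Walk x y) (hx : g x = 0) : g y = 0 := by
  induction w with
  | nil => exact hx
  | cons h p ih => exact ih (zero_spread hg0 heig h hx)

private lemma perron_pos {G : SimpleGraph V} [DecidableRel G.Adj] {g : V → ℝ} {θ : ℝ}
    (hconn : G.Connected) (hg0 : ∀ x, 0 ≤ g x) (hgne : g ≠ 0)
    (heig : (G.adjMatrix ℝ) *ᵥ g = θ • g) : ∀ x, 0 < g x := by
  obtain ⟨x0, hx0⟩ : ∃ x, g x ≠ 0 := by
    by_contra hc; push_neg at hc; exact hgne (funext hc)
  intro x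
  rcases lt_or_eq_of_le (hg0 x) with hlt | heq
  · exact hlt
  · exfalso
    obtain ⟨w⟩ := hconn.preconnected x x0
    exact hx0 (walk_zero hg0 heig w heq.symm)

private lemma abs_eig {G : SimpleGraph V} [DecidableRel G.Adj] {θ0 : ℝ}
    (hPSD : (θ0 • (1 : Matrix V V ℝ) - G.adjMatrix ℝ).PosSemidef)
    {f : V → ℝ} (hf : (G.adjMatrix ℝ) *ᵥ f = θ0 • f) :
    (G.adjMatrix ℝ) *ᵥ (fun x => |f x|) = θ0 • (fun x => |f x|) := by
  set A := G.adjMatrix ℝ with hAdef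
  set g : V → ℝ := fun x => |f x| with hg
  have hAf : f ⬝ᵥ A *ᵥ f = θ0 * (f ⬝ᵥ f) := by
    rw [hf]; simp [dotProduct, Finset.mul_sum, mul_comm, mul_assoc, mul_left_comm]
  have hgg : g ⬝ᵥ g = f ⬝ᵥ f := by
    simp [dotProduct, hg, abs_mul_abs_self]
  have hmono : f ⬝ᵥ A *ᵥ f ≤ g ⬝ᵥ A *ᵥ g := by
    simp only [dotProduct, Matrix.mulVec, Finset.mul_sum]
    refine Finset.sum_le_sum fun x _ => Finset.sum_le_sum fun y _ => ?_
    have hA0 : 0 ≤ A x y := by by_cases h : G.Adj x y <;> simp [hAdef, h]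
    calc f x * (A x y * f y) = A x y * (f x * f y) := by ring
      _ ≤ A x y * |f x * f y| := mul_le_mul_of_nonneg_left (le_abs_self _) hA0
      _ = g x * (A x y * g y) := by rw [abs_mul]; ring
  have hkey : star g ⬝ᵥ (θ0 • (1 : Matrix V V ℝ) - A) *ᵥ g = 0 := by
    have hstar : star g = g := by funext x; simp
    rw [hstar]
    have hexp : (θ0 • (1 : Matrix V V ℝ) - A) *ᵥ g = θ0 • g - A *ᵥ g := by
      rw [Matrix.sub_mulVec, Matrix.smul_mulVec, Matrix.one_mulVec]
    rw [hexp, dotProduct_sub, dotProduct_smul]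
    refine le_antisymm ?_ ?_
    · have : θ0 * (g ⬝ᵥ g) - g ⬝ᵥ A *ᵥ g ≤ θ0 * (g ⬝ᵥ g) - f ⬝ᵥ A *ᵥ f :=
        sub_le_sub_left hmono _
      rw [hgg, hAf] at this
      simpa [hgg] using this
    · have := hPSD.dotProduct_mulVec_nonneg g
      have hstar2 : star g = g := by funext x; simp
      rw [hstar2, hexp, dotProduct_sub, dotProduct_smul] at this
      exact this
  have hzero := (hPSD.dotProduct_mulVec_zero_iff g).mp hkey
  have hexp : (θ0 • (1 : Matrix V V ℝ) - A) *ᵥ g = θ0 • g - A *ᵥ g := by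
    rw [Matrix.sub_mulVec, Matrix.smul_mulVec, Matrix.one_mulVec]
  rw [hexp, sub_eq_zero] at hzero
  exact hzero.symm


private lemma eig_unique {G : SimpleGraph V} [DecidableRel G.Adj] {θ0 : ℝ}
    (hconn : G.Connected)
    (hPSD : (θ0 • (1 : Matrix V V ℝ) - G.adjMatrix ℝ).PosSemidef)
    {u : V → ℝ} (hueig : (G.adjMatrix ℝ) *ᵥ u = θ0 • u) (hupos : ∀ x, 0 < u x)
    {g : V → ℝ} (hgeig : (G.adjMatrix ℝ) *ᵥ g = θ0 • g) (x0 : V) :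
    g = (g x0 / u x0) • u := by
  set c : ℝ := g x0 / u x0 with hc
  set w : V → ℝ := g - c • u with hw
  have hweig : (G.adjMatrix ℝ) *ᵥ w = θ0 • w := by
    rw [hw, Matrix.mulVec_sub, Matrix.mulVec_smul, hgeig, hueig, smul_sub, smul_comm]
  have hx0 : w x0 = 0 := by
    have hu0 : u x0 ≠ 0 := (hupos x0).ne'
    simp only [hw, hc, Pi.sub_apply, Pi.smul_apply, smul_eq_mul]
    field_simp
    ring
  by_cases hz : w = 0
  · have : g - c • u = 0 := by rw [← hw]; exact hz
    have := sub_eq_zero.mp this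
    rw [this]
  · exfalso
    have habs := abs_eig hPSD hweig
    have hne : (fun x => |w x|) ≠ 0 := by
      intro hzz
      apply hz
      funext x
      have := congrFun hzz x
      simpa [abs_eq_zero] using this
    have hpos := perron_pos hconn (fun x => abs_nonneg _) hne habs x0
    rw [hx0] at hpos
    simp at hpos

end Aux

/-- If `Γ ∈ 𝒢₃(θ0,θ1,θ2)` with adjacency matrix `A`, then there is a positive
Perron eigenvector `α` for `θ0` with
`A² - (θ1+θ2)A + θ1θ2 I = α αᵀ`, and the degree of each vertex `x` is `α x ^ 2 - θ1 θ2`. -/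
theorem stmt2 {V : Type} [Fintype V] [DecidableEq V] (G : SimpleGraph V) [DecidableRel G.Adj]
    (θ0 θ1 θ2 : ℝ) (h : InG3 G θ0 θ1 θ2) :
    ∃ α : V → ℝ, (∀ x, 0 < α x) ∧
      (SimpleGraph.adjMatrix ℝ G).mulVec α = θ0 • α ∧
      SimpleGraph.adjMatrix ℝ G * SimpleGraph.adjMatrix ℝ G
        - (θ1 + θ2) • SimpleGraph.adjMatrix ℝ G
        + (θ1 * θ2) • (1 : Matrix V V ℝ) = Matrix.vecMulVec α α ∧
      ∀ x : V, (G.degree x : ℝ) = α x ^ 2 - θ1 * θ2 := by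
  obtain ⟨hconn, h01, h12, hset⟩ := h
  have h02 : θ2 < θ0 := h12.trans h01
  set A := SimpleGraph.adjMatrix ℝ G with hAdef
  have hA : A.IsHermitian := by
    show Aᴴ = A
    ext i j
    simp [hAdef, Matrix.conjTranspose_apply, SimpleGraph.adj_comm]
  set U : Matrix V V ℝ := (hA.eigenvectorUnitary : Matrix V V ℝ) with hUdef
  have hU1 : U * star U = 1 := Matrix.mem_unitaryGroup_iff.mp hA.eigenvectorUnitary.2
  have hU2 : star U * U = 1 := Matrix.mem_unitaryGroup_iff'.mp hA.eigenvectorUnitary.2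
  have hspec : A = U * Matrix.diagonal hA.eigenvalues * star U := by
    rw [hUdef]
    have hs := hA.spectral_theorem
    rwa [RCLike.ofReal_real_eq_id, Function.id_comp] at hs
  have hmem : ∀ i, hA.eigenvalues i = θ0 ∨ hA.eigenvalues i = θ1 ∨ hA.eigenvalues i = θ2 := by
    intro i
    have hadj : adjEig G (hA.eigenvalues i) := by
      refine ⟨⇑(hA.eigenvectorBasis i), ?_, hA.mulVec_eigenvectorBasis i⟩
      intro hzz
      exact hA.eigenvectorBasis.orthonormal.ne_zero i (by ext x; exact congrFun hzz x)
    have hin : hA.eigenvalues i ∈ ({θ0, θ1, θ2} : Set ℝ) := by rw [← hset]; exact hadj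
    simpa using hin
  have hMfact : θ0 • (1 : Matrix V V ℝ) - A
      = U * Matrix.diagonal (fun i => θ0 - hA.eigenvalues i) * star U := by
    have h' : A - θ0 • (1 : Matrix V V ℝ)
        = U * Matrix.diagonal (fun i => hA.eigenvalues i - θ0) * star U := by
      conv_lhs => rw [hspec]
      exact conj_sub_smul hU1 _ _
    have hdn : (-(Matrix.diagonal (fun i => hA.eigenvalues i - θ0)) : Matrix V V ℝ)
        = Matrix.diagonal (fun i => θ0 - hA.eigenvalues i) := by
      ext i j
      by_cases hij : i = j
      · subst hij
        simp only [Matrix.neg_apply, Matrix.diagonal_apply_eq]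
        ring
      · simp [Matrix.neg_apply, Matrix.diagonal_apply_ne _ hij]
    calc θ0 • (1 : Matrix V V ℝ) - A = -(A - θ0 • 1) := by rw [neg_sub]
      _ = U * Matrix.diagonal (fun i => θ0 - hA.eigenvalues i) * star U := by
          rw [h', ← Matrix.neg_mul, ← Matrix.mul_neg, hdn]
  have hPSD : (θ0 • (1 : Matrix V V ℝ) - A).PosSemidef := by
    rw [hMfact, Matrix.star_eq_conjTranspose]
    refine Matrix.PosSemidef.mul_mul_conjTranspose_same ?_ U
    refine Matrix.posSemidef_diagonal_iff.mpr fun i => ?_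
    rcases hmem i with hh | hh | hh <;> rw [hh] <;> linarith
  -- Perron vector
  obtain ⟨f0, hf0ne, hf0⟩ : adjEig G θ0 := by
    have hin : θ0 ∈ {θ : ℝ | adjEig G θ} := by rw [hset]; exact Or.inl rfl
    exact hin
  set u : V → ℝ := fun x => |f0 x| with hu
  have hueig : A *ᵥ u = θ0 • u := abs_eig hPSD hf0
  have hune : u ≠ 0 := fun hz => hf0ne (funext fun x => abs_eq_zero.mp (congrFun hz x))
  have hupos : ∀ x, 0 < u x := perron_pos hconn (fun x => abs_nonneg _) hune hueig
  obtain ⟨x0⟩ : Nonempty V := hconn.nonempty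
  have hux0 : u x0 ≠ 0 := (hupos x0).ne'
  set B : Matrix V V ℝ := A * A - (θ1 + θ2) • A + (θ1 * θ2) • 1 with hBdef
  have hB2 : B = (A - θ1 • 1) * (A - θ2 • 1) := by
    rw [hBdef]
    simp only [Matrix.mul_sub, Matrix.sub_mul, Matrix.mul_smul, Matrix.smul_mul,
      Matrix.mul_one, Matrix.one_mul, smul_smul, add_smul, smul_sub]
    rw [mul_comm θ2 θ1]
    abel
  have hA1 : A - θ1 • (1 : Matrix V V ℝ)
      = U * Matrix.diagonal (fun i => hA.eigenvalues i - θ1) * star U := by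
    conv_lhs => rw [hspec]
    exact conj_sub_smul hU1 _ _
  have hA2 : A - θ2 • (1 : Matrix V V ℝ)
      = U * Matrix.diagonal (fun i => hA.eigenvalues i - θ2) * star U := by
    conv_lhs => rw [hspec]
    exact conj_sub_smul hU1 _ _
  have hA0 : A - θ0 • (1 : Matrix V V ℝ)
      = U * Matrix.diagonal (fun i => hA.eigenvalues i - θ0) * star U := by
    conv_lhs => rw [hspec]
    exact conj_sub_smul hU1 _ _
  have hBfact : B = U * Matrix.diagonal
      (fun i => (hA.eigenvalues i - θ1) * (hA.eigenvalues i - θ2)) * star U := by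
    rw [hB2, hA1, hA2, conj_mul_conj hU2]
  have hPSDB : B.PosSemidef := by
    rw [hBfact, Matrix.star_eq_conjTranspose]
    refine Matrix.PosSemidef.mul_mul_conjTranspose_same ?_ U
    refine Matrix.posSemidef_diagonal_iff.mpr fun i => ?_
    rcases hmem i with hh | hh | hh <;> rw [hh] <;> nlinarith
  have hkill : (A - θ0 • 1) * B = 0 := by
    rw [hBfact, hA0, conj_mul_conj hU2]
    have hzf : (fun i => (hA.eigenvalues i - θ0)
        * ((hA.eigenvalues i - θ1) * (hA.eigenvalues i - θ2))) = fun _ => (0 : ℝ) := by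
      funext i; rcases hmem i with hh | hh | hh <;> rw [hh] <;> ring
    rw [hzf, Matrix.diagonal_zero, Matrix.mul_zero, Matrix.zero_mul]
  have hAB : A * B = θ0 • B := by
    have h' := hkill
    rw [Matrix.sub_mul, sub_eq_zero, Matrix.smul_mul, Matrix.one_mul] at h'
    exact h'
  have hcol : ∀ y, A *ᵥ (fun x => B x y) = θ0 • (fun x => B x y) := by
    intro y
    funext x
    have h' := congrArg (fun M : Matrix V V ℝ => M x y) hAB
    simpa [Matrix.mul_apply, Matrix.mulVec, dotProduct] using h'
  have hsym : ∀ x y, B x y = B y x := by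
    intro x y
    conv_lhs => rw [← hPSDB.1]
    simp [Matrix.conjTranspose_apply]
  have hBxy : ∀ x y, B x y = (B x0 y / u x0) * u x := by
    intro x y
    have h' := eig_unique hconn hPSD hueig hupos (hcol y) x0
    have h'' := congrFun h' x
    simpa using h''
  set t : ℝ := B x0 x0 / u x0 / u x0 with ht
  have hBt : ∀ x y, B x y = t * u x * u y := by
    intro x y
    have h1 : B x0 y = (B x0 x0 / u x0) * u y := by rw [hsym x0 y, hBxy y x0]
    rw [hBxy x y, h1, ht]
    field_simp
  have hBu : B *ᵥ u = ((θ0 - θ1) * (θ0 - θ2)) • u := by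
    have hin : (A - θ2 • (1 : Matrix V V ℝ)) *ᵥ u = (θ0 - θ2) • u := by
      rw [Matrix.sub_mulVec, Matrix.smul_mulVec, Matrix.one_mulVec, hueig, ← sub_smul]
    rw [hB2, ← Matrix.mulVec_mulVec, hin, Matrix.mulVec_smul, Matrix.sub_mulVec,
      Matrix.smul_mulVec, Matrix.one_mulVec, hueig, ← sub_smul, smul_smul]
    congr 1
    ring
  set S : ℝ := ∑ y, u y * u y with hS
  have hSpos : 0 < S :=
    Finset.sum_pos (fun y _ => mul_pos (hupos y) (hupos y)) ⟨x0, Finset.mem_univ x0⟩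
  have htS : t * S = (θ0 - θ1) * (θ0 - θ2) := by
    have h1 := congrFun hBu x0
    have h2 : (B *ᵥ u) x0 = t * u x0 * S := by
      simp only [Matrix.mulVec, dotProduct, hS, Finset.mul_sum]
      refine Finset.sum_congr rfl fun y _ => ?_
      rw [hBt x0 y]; ring
    have h3 : (((θ0 - θ1) * (θ0 - θ2)) • u) x0 = (θ0 - θ1) * (θ0 - θ2) * u x0 := rfl
    rw [h2, h3] at h1
    have h4 : (t * S) * u x0 = ((θ0 - θ1) * (θ0 - θ2)) * u x0 := by rw [← h1]; ring
    exact mul_right_cancel₀ hux0 h4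
  have htpos : 0 < t := by
    have hnum : 0 < (θ0 - θ1) * (θ0 - θ2) := mul_pos (by linarith) (by linarith)
    have hteq : t = ((θ0 - θ1) * (θ0 - θ2)) / S := by
      rw [← htS]; field_simp
    rw [hteq]; exact div_pos hnum hSpos
  have hst := Real.mul_self_sqrt htpos.le
  refine ⟨fun x => Real.sqrt t * u x,
    fun x => mul_pos (Real.sqrt_pos.mpr htpos) (hupos x), ?_, ?_, ?_⟩
  · have heq : (fun x => Real.sqrt t * u x) = Real.sqrt t • u := rfl
    rw [heq, Matrix.mulVec_smul, hueig, smul_comm]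
  · ext x y
    rw [Matrix.vecMulVec_apply, hBt x y]
    show t * u x * u y = (Real.sqrt t * u x) * (Real.sqrt t * u y)
    rw [show (Real.sqrt t * u x) * (Real.sqrt t * u y)
        = (Real.sqrt t * Real.sqrt t) * (u x * u y) by ring, hst]
    ring
  · intro x
    have hdiag : B x x = (G.degree x : ℝ) + θ1 * θ2 := by
      have hAA : (A * A) x x = (G.degree x : ℝ) := by
        rw [hAdef]
        exact_mod_cast SimpleGraph.adjMatrix_mul_self_apply_self (G := G) (α := ℝ) x
      have hAxx : A x x = 0 := by simp [hAdef]
      rw [hBdef]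
      simp only [Matrix.add_apply, Matrix.sub_apply, Matrix.smul_apply, Matrix.one_apply_eq,
        hAA, hAxx, smul_eq_mul, mul_zero, mul_one]
      ring
    have h5 : B x x = (Real.sqrt t * u x) ^ 2 := by
      rw [hBt x x]
      rw [show (Real.sqrt t * u x) ^ 2 = (Real.sqrt t * Real.sqrt t) * (u x * u x) by ring, hst]
      ring
    rw [h5] at hdiag
    show (G.degree x : ℝ) = (Real.sqrt t * u x) ^ 2 - θ1 * θ2
    linarith
end

section
/- Let Γ ∈ 𝒢₃(θ0,θ1,θ2) have v vertices and suppose Γ is k-regular for a natural number k. Then (k:ℝ) = θ0, and there exist natural numbers a and c with (a:ℝ) = θ0 − 1 + (θ1+1)·(θ2+1) and (c:ℝ) = θ0 + θ1·θ2 such that Γ is strongly regular with parameters (v, k, a, c), i.e. every two adjacent vertices have exactly a common neighbours and every two distinct non-adjacent vertices have exactly c common neighbours. -/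
open Matrix SimpleGraph Finset

section Aux

variable {V : Type} [Fintype V] [DecidableEq V] (G : SimpleGraph V) [DecidableRel G.Adj]

/-- Annihilating polynomial from the spectral theorem. -/
lemma aux_annihilate {A : Matrix V V ℝ} (hA : A.IsHermitian) (θ0 θ1 θ2 : ℝ)
    (hev : ∀ i, hA.eigenvalues i = θ0 ∨ hA.eigenvalues i = θ1 ∨ hA.eigenvalues i = θ2) :
    (A - θ0 • 1) * ((A - θ1 • 1) * (A - θ2 • 1)) = 0 := by
  set U : Matrix V V ℝ := (hA.eigenvectorUnitary : Matrix V V ℝ) with hU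
  have hUU : (star U) * U = 1 := by
    simpa [hU] using (Matrix.mem_unitaryGroup_iff').mp hA.eigenvectorUnitary.2
  have hUU' : U * (star U) = 1 := by
    simpa [hU] using (Matrix.mem_unitaryGroup_iff).mp hA.eigenvectorUnitary.2
  have hco : RCLike.ofReal ∘ hA.eigenvalues = hA.eigenvalues := by
    funext i; simp [RCLike.ofReal_real_eq_id]
  have hD : A = U * Matrix.diagonal hA.eigenvalues * star U := by
    have := hA.spectral_theorem
    rwa [hco] at this
  have key : ∀ θ : ℝ, A - θ • 1 = U * Matrix.diagonal (fun i => hA.eigenvalues i - θ) * star U := by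
    intro θ
    have h1 : (θ • (1 : Matrix V V ℝ)) = U * Matrix.diagonal (fun _ => θ) * star U := by
      rw [show Matrix.diagonal (fun _ : V => θ) = θ • (1 : Matrix V V ℝ) by
        rw [smul_one_eq_diagonal]]
      rw [Matrix.mul_smul, Matrix.smul_mul, mul_one, hUU']
    conv_lhs => rw [hD, h1]
    rw [← Matrix.sub_mul, ← Matrix.mul_sub, Matrix.diagonal_sub]
  have assoc : ∀ (X Y : Matrix V V ℝ),
      (U * X * star U) * (U * Y * star U) = U * (X * Y) * star U := by
    intro X Y
    simp only [Matrix.mul_assoc]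
    rw [← Matrix.mul_assoc (star U) U, hUU, Matrix.one_mul]
  rw [key, key, key, assoc, assoc, Matrix.diagonal_mul_diagonal, Matrix.diagonal_mul_diagonal]
  have : (fun i => (hA.eigenvalues i - θ0) * ((hA.eigenvalues i - θ1) * (hA.eigenvalues i - θ2)))
      = fun _ => (0:ℝ) := by
    funext i
    rcases hev i with h | h | h <;> rw [h] <;> ring
  rw [this, Matrix.diagonal_zero, Matrix.mul_zero, Matrix.zero_mul]

/-- any eigenvalue of a `k`-regular graph has absolute value at most `k`. -/
lemma aux_eig_abs_le {k : ℕ} (hreg : G.IsRegularOfDegree k) {θ : ℝ} (hθ : adjEig G θ) :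
    |θ| ≤ (k : ℝ) := by
  obtain ⟨f, hf0, hf⟩ := hθ
  obtain ⟨y, hy⟩ := Function.ne_iff.mp hf0
  haveI : Nonempty V := ⟨y⟩
  obtain ⟨x, -, hx⟩ := Finset.exists_max_image Finset.univ (fun a => |f a|) Finset.univ_nonempty
  have hxpos : 0 < |f x| := lt_of_lt_of_le (abs_pos.mpr hy) (hx y (Finset.mem_univ y))
  have h1 : |θ| * |f x| ≤ (k : ℝ) * |f x| := by
    have h2 : ((G.adjMatrix ℝ).mulVec f) x = θ * f x := by rw [hf]; rfl
    rw [SimpleGraph.adjMatrix_mulVec_apply] at h2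
    calc |θ| * |f x| = |∑ u ∈ G.neighborFinset x, f u| := by rw [← abs_mul, ← h2]
      _ ≤ ∑ u ∈ G.neighborFinset x, |f u| := Finset.abs_sum_le_sum_abs _ _
      _ ≤ ∑ u ∈ G.neighborFinset x, |f x| :=
          Finset.sum_le_sum fun u _ => hx u (Finset.mem_univ u)
      _ = (k : ℝ) * |f x| := by
          rw [Finset.sum_const, G.card_neighborFinset_eq_degree, hreg x, nsmul_eq_mul]
  exact le_of_mul_le_mul_right h1 hxpos

/-- In a connected `k`-regular graph, an eigenvector for `k` is constant. -/
lemma aux_eig_const (hconn : G.Connected) {k : ℕ} (hreg : G.IsRegularOfDegree k) (hk : 0 < k)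
    {f : V → ℝ} (hf : (SimpleGraph.adjMatrix ℝ G).mulVec f = (k : ℝ) • f) (x y : V) :
    f x = f y := by
  haveI : Nonempty V := hconn.nonempty
  obtain ⟨x0, -, hx0⟩ := Finset.exists_max_image Finset.univ f Finset.univ_nonempty
  have hM : ∀ a, f a ≤ f x0 := fun a => hx0 a (Finset.mem_univ a)
  have step : ∀ z w, f z = f x0 → G.Adj z w → f w = f x0 := by
    intro z w hz hzw
    by_contra hne
    have hlt : f w < f x0 := lt_of_le_of_ne (hM w) hne
    have h2 : ((G.adjMatrix ℝ).mulVec f) z = (k : ℝ) * f z := by rw [hf]; rfl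
    rw [SimpleGraph.adjMatrix_mulVec_apply] at h2
    have h3 : ∑ u ∈ G.neighborFinset z, f u < ∑ u ∈ G.neighborFinset z, f x0 :=
      Finset.sum_lt_sum (fun u _ => hM u)
        ⟨w, (G.mem_neighborFinset z w).mpr hzw, hlt⟩
    rw [Finset.sum_const, G.card_neighborFinset_eq_degree, hreg z, nsmul_eq_mul] at h3
    rw [h2, hz] at h3
    exact lt_irrefl _ h3
  have reach : ∀ {a b : V}, G.Reachable a b → f a = f x0 → f b = f x0 := by
    intro a b hab ha
    obtain ⟨w⟩ := hab
    induction w with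
    | nil => exact ha
    | cons h p ih => exact ih (step _ _ ha h)
  have hfx : ∀ z, f z = f x0 := fun z => reach (hconn.preconnected x0 z) rfl
  rw [hfx x, hfx y]

/-- entry of the square of the adjacency matrix counts common neighbours. -/
lemma aux_sq_apply (i j : V) :
    (SimpleGraph.adjMatrix ℝ G * SimpleGraph.adjMatrix ℝ G) i j
      = (Fintype.card (G.commonNeighbors i j) : ℝ) := by
  classical
  have h1 : (G.commonNeighbors i j).toFinset = Finset.univ.filter (fun u => G.Adj i u ∧ G.Adj j u) := by
    ext u; simp [SimpleGraph.mem_commonNeighbors]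
  rw [← Set.toFinset_card, h1, Finset.card_filter, Matrix.mul_apply]
  push_cast
  refine Finset.sum_congr rfl fun u _ => ?_
  by_cases ha : G.Adj i u <;> by_cases hb : G.Adj j u <;>
    simp [ha, hb, SimpleGraph.adjMatrix_apply, G.adj_comm u j]

/-- eigenvalues of a complete graph. -/
lemma aux_complete (hcomp : ∀ i j : V, i ≠ j → G.Adj i j) {θ : ℝ} (hθ : adjEig G θ) :
    θ = -1 ∨ θ = (Fintype.card V : ℝ) - 1 := by
  obtain ⟨f, hf0, hf⟩ := hθ
  by_cases h1 : θ = -1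
  · exact Or.inl h1
  right
  have hN : ∀ i : V, G.neighborFinset i = Finset.univ.erase i := by
    intro i
    ext u
    simp only [SimpleGraph.mem_neighborFinset, Finset.mem_erase, Finset.mem_univ, and_true]
    constructor
    · exact fun h => (G.ne_of_adj h).symm
    · exact fun h => hcomp i u (Ne.symm h)
  have key : ∀ i, (θ + 1) * f i = ∑ u, f u := by
    intro i
    have h2 : ((G.adjMatrix ℝ).mulVec f) i = θ * f i := by rw [hf]; rfl
    rw [SimpleGraph.adjMatrix_mulVec_apply, hN i,
      Finset.sum_erase_eq_sub (Finset.mem_univ i)] at h2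
    linarith [h2]
  obtain ⟨y, hy⟩ := Function.ne_iff.mp hf0
  have hconst : ∀ i, f i = f y := by
    intro i
    have hi := key i; have hyy := key y
    have hθ1 : θ + 1 ≠ 0 := fun hc => h1 (by linarith [hc])
    have := hi.trans hyy.symm
    exact mul_right_cancel₀ hθ1 (by linarith [this])
  have hsum : ∑ u, f u = (Fintype.card V : ℝ) * f y := by
    rw [Finset.sum_congr rfl fun u _ => hconst u, Finset.sum_const, Finset.card_univ,
      nsmul_eq_mul]
  have := key y
  rw [hsum] at this
  have hθ2 : θ + 1 = (Fintype.card V : ℝ) := mul_right_cancel₀ hy (by linarith [this])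
  linarith [hθ2]

end Aux

/-- A regular graph in `𝒢₃(θ0,θ1,θ2)` on `v` vertices of degree `k` satisfies `k = θ0`
and is strongly regular with parameters `(v, k, θ0 - 1 + (θ1+1)(θ2+1), θ0 + θ1 θ2)`. -/
theorem stmt3 {V : Type} [Fintype V] [DecidableEq V] (G : SimpleGraph V) [DecidableRel G.Adj]
    (θ0 θ1 θ2 : ℝ) (v k : ℕ) (hv : Fintype.card V = v)
    (hreg : G.IsRegularOfDegree k) (h : InG3 G θ0 θ1 θ2) :
    (k : ℝ) = θ0 ∧ ∃ a c : ℕ,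
      (a : ℝ) = θ0 - 1 + (θ1 + 1) * (θ2 + 1) ∧
      (c : ℝ) = θ0 + θ1 * θ2 ∧
      G.IsSRGWith v k a c := by
  obtain ⟨hconn, h01, h12, hset⟩ := h
  haveI : Nonempty V := hconn.nonempty
  have hmem : ∀ θ : ℝ, adjEig G θ → (θ = θ0 ∨ θ = θ1 ∨ θ = θ2) := by
    intro θ hθ
    have : θ ∈ {θ : ℝ | adjEig G θ} := hθ
    rw [hset] at this
    simpa using this
  have hθ0 : adjEig G θ0 := by
    have : θ0 ∈ ({θ0, θ1, θ2} : Set ℝ) := by simp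
    rw [← hset] at this; exact this
  have hθ1 : adjEig G θ1 := by
    have : θ1 ∈ ({θ0, θ1, θ2} : Set ℝ) := by simp
    rw [← hset] at this; exact this
  have hθ2 : adjEig G θ2 := by
    have : θ2 ∈ ({θ0, θ1, θ2} : Set ℝ) := by simp
    rw [← hset] at this; exact this
  -- `k` is an eigenvalue
  have hk : adjEig G (k : ℝ) := by
    refine ⟨Function.const _ 1, ?_, ?_⟩
    · intro hc
      have := congrFun hc (Classical.arbitrary V)
      simp [Function.const] at this
    · funext x
      rw [SimpleGraph.adjMatrix_mulVec_const_apply_of_regular hreg]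
      simp [Function.const]
  -- `k = θ0`
  have hb0 : |θ0| ≤ (k : ℝ) := aux_eig_abs_le G hreg hθ0
  have hkθ0 : (k : ℝ) = θ0 := by
    rcases hmem _ hk with h | h | h
    · exact h
    · exfalso; have := le_abs_self θ0; linarith
    · exfalso; have := le_abs_self θ0; linarith
  -- `k > 0`
  have hb2 : |θ2| ≤ (k : ℝ) := aux_eig_abs_le G hreg hθ2
  have hkposR : (0 : ℝ) < k := by
    have := neg_abs_le θ2; linarith
  have hkpos : 0 < k := by exact_mod_cast hkposR
  refine ⟨hkθ0, ?_⟩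
  -- annihilating identity
  set A := SimpleGraph.adjMatrix ℝ G with hA_def
  have hA : A.IsHermitian := by
    ext i j
    simp [Matrix.conjTranspose_apply, hA_def, SimpleGraph.adjMatrix_apply, G.adj_comm i j]
  have hev : ∀ i, hA.eigenvalues i = θ0 ∨ hA.eigenvalues i = θ1 ∨ hA.eigenvalues i = θ2 := by
    intro i
    exact hmem _ ⟨_, (WithLp.ofLp_eq_zero 2).ne.2 <| hA.eigenvectorBasis.orthonormal.ne_zero i, hA.mulVec_eigenvectorBasis i⟩
  have hann := aux_annihilate hA θ0 θ1 θ2 hev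
  set B := (A - θ1 • 1) * (A - θ2 • 1) with hB
  have hAB : A * B = (k : ℝ) • B := by
    have h0 : (A - θ0 • 1) * B = 0 := hann
    rw [Matrix.sub_mul, Matrix.smul_mul, Matrix.one_mul, sub_eq_zero] at h0
    rw [h0, hkθ0]
  -- columns of B are constant
  have hcol : ∀ i i' j : V, B i j = B i' j := by
    intro i i' j
    have hg : A.mulVec (fun l => B l j) = (k : ℝ) • (fun l => B l j) := by
      funext x
      have h1 : (A * B) x j = ((k : ℝ) • B) x j := by rw [hAB]
      rw [Matrix.mul_apply] at h1
      simpa [Matrix.mulVec, dotProduct] using h1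
    exact aux_eig_const G hconn hreg hkpos hg i i'
  -- entrywise expansion of B
  have hBexp : B = A * A - (θ1 + θ2) • A + (θ1 * θ2) • (1 : Matrix V V ℝ) := by
    rw [hB]
    simp only [Matrix.sub_mul, Matrix.mul_sub, Matrix.smul_mul, Matrix.mul_smul,
      Matrix.one_mul, Matrix.mul_one, smul_sub, smul_smul, add_smul, mul_comm]
    abel
  -- diagonal entries of B
  have hdiag : ∀ j : V, B j j = (k : ℝ) + θ1 * θ2 := by
    intro j
    have hAA : (A * A) j j = (k : ℝ) := by
      rw [hA_def, SimpleGraph.adjMatrix_mul_self_apply_self, hreg j]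
    have hAjj : A j j = 0 := by simp [hA_def]
    have := congrFun (congrFun hBexp j) j
    simp only [Matrix.add_apply, Matrix.sub_apply, Matrix.smul_apply, Matrix.one_apply_eq,
      smul_eq_mul] at this
    rw [this, hAA, hAjj]
    ring
  have hBconst : ∀ i j : V, B i j = (k : ℝ) + θ1 * θ2 := fun i j =>
    (hcol i j j).trans (hdiag j)
  -- common neighbour counts
  have hcount : ∀ i j : V, (Fintype.card (G.commonNeighbors i j) : ℝ)
      = (k : ℝ) + θ1 * θ2 + (θ1 + θ2) * A i j - (θ1 * θ2) * (1 : Matrix V V ℝ) i j := by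
    intro i j
    have h1 := congrFun (congrFun hBexp i) j
    simp only [Matrix.add_apply, Matrix.sub_apply, Matrix.smul_apply, smul_eq_mul] at h1
    rw [hBconst i j] at h1
    have h2 := aux_sq_apply G i j
    rw [hA_def] at h1 ⊢
    rw [← h2]
    linarith [h1]
  have hcount_adj : ∀ i j : V, G.Adj i j →
      (Fintype.card (G.commonNeighbors i j) : ℝ) = θ0 - 1 + (θ1 + 1) * (θ2 + 1) := by
    intro i j hij
    rw [hcount i j]
    have hne : i ≠ j := G.ne_of_adj hij
    have hA1 : A i j = 1 := by simp [hA_def, hij]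
    have hI0 : (1 : Matrix V V ℝ) i j = 0 := Matrix.one_apply_ne hne
    rw [hA1, hI0, ← hkθ0]
    ring
  have hcount_nadj : ∀ i j : V, i ≠ j → ¬ G.Adj i j →
      (Fintype.card (G.commonNeighbors i j) : ℝ) = θ0 + θ1 * θ2 := by
    intro i j hne hnadj
    rw [hcount i j]
    have hA1 : A i j = 0 := by simp [hA_def, hnadj]
    have hI0 : (1 : Matrix V V ℝ) i j = 0 := Matrix.one_apply_ne hne
    rw [hA1, hI0, ← hkθ0]
    ring
  -- an adjacent pair exists
  obtain ⟨x⟩ := ‹Nonempty V›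
  have hxne : (G.neighborFinset x).Nonempty := by
    rw [← Finset.card_pos, G.card_neighborFinset_eq_degree, hreg x]
    exact hkpos
  obtain ⟨y, hy⟩ := hxne
  have hxy : G.Adj x y := (G.mem_neighborFinset x y).mp hy
  -- a non-adjacent pair exists
  have hnon : ∃ i j : V, i ≠ j ∧ ¬ G.Adj i j := by
    by_contra hc
    push_neg at hc
    have hcomp : ∀ i j : V, i ≠ j → G.Adj i j := hc
    have hc1 := aux_complete G hcomp hθ1
    have hc2 := aux_complete G hcomp hθ2
    have hcard1 : (1 : ℝ) ≤ (Fintype.card V : ℝ) := by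
      exact_mod_cast Fintype.card_pos
    have hklt : (k : ℝ) ≤ (Fintype.card V : ℝ) - 1 := by
      have h3 := G.degree_lt_card_verts x
      rw [hreg x] at h3
      have h4 : k + 1 ≤ Fintype.card V := h3
      have h5 : (k : ℝ) + 1 ≤ (Fintype.card V : ℝ) := by exact_mod_cast h4
      linarith
    rcases hc1 with h1 | h1 <;> rcases hc2 with h2 | h2
    · exact (ne_of_gt h12) (h1.trans h2.symm)
    · linarith
    · linarith
    · exact (ne_of_gt h12) (h1.trans h2.symm)
  obtain ⟨i0, j0, hij0, hnadj0⟩ := hnon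
  refine ⟨Fintype.card (G.commonNeighbors x y), Fintype.card (G.commonNeighbors i0 j0),
    hcount_adj x y hxy, hcount_nadj i0 j0 hij0 hnadj0, ?_⟩
  refine ⟨hv, hreg, ?_, ?_⟩
  · intro p q hpq
    have := (hcount_adj p q hpq).trans (hcount_adj x y hxy).symm
    exact_mod_cast this
  · intro p q hpq hnpq
    have := (hcount_nadj p q hpq hnpq).trans (hcount_nadj i0 j0 hij0 hnadj0).symm
    exact_mod_cast this
end

section
/- Let Γ ∈ 𝒢₃(θ0,θ1,θ2) and suppose the vertex set of Γ is partitioned into nonempty sets V1 and V2 such that the induced subgraph on V1 is complete or edgeless, the induced subgraph on V2 is complete or edgeless, and the V1×V2 biadjacency matrix of Γ has constant row sums and constant column sums. Then the coherent rank of Γ is at most 8. -/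
open Matrix

/-- A coherent configuration of rank `r` on the finite set `V`, given as a family of
`{0,1}`-matrices `A 1, …, A r`. -/
def IsCoherentConfig {V : Type} [Fintype V] [DecidableEq V] {r : ℕ}
    (A : Fin r → Matrix V V ℝ) : Prop :=
  (∀ i x y, A i x y = 0 ∨ A i x y = 1) ∧
  (∑ i, A i) = Matrix.of (fun _ _ => (1 : ℝ)) ∧
  (∀ i, ∃ j, (A i)ᵀ = A j) ∧
  (∃ Δ : Finset (Fin r), ∑ i ∈ Δ, A i = 1) ∧
  (∀ i j, A i * A j ∈ Submodule.span ℝ (Set.range A))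

/-- The coherent rank of `G` is `n`: `n` is the least rank of a coherent configuration on
the vertex set of `G` whose real linear span contains the adjacency matrix of `G`. -/
def HasCoherentRank {V : Type} [Fintype V] [DecidableEq V] (G : SimpleGraph V)
    [DecidableRel G.Adj] (n : ℕ) : Prop :=
  IsLeast {r : ℕ | ∃ A : Fin r → Matrix V V ℝ,
    IsCoherentConfig A ∧ SimpleGraph.adjMatrix ℝ G ∈ Submodule.span ℝ (Set.range A)} n

section AuxSection
open Finset
set_option linter.unusedSectionVars false
set_option maxHeartbeats 1000000

namespace Stmt6Aux

variable {V : Type} [Fintype V] [DecidableEq V]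

def Dm (S : Finset V) : Matrix V V ℝ := Matrix.of fun x y => if x = y ∧ x ∈ S then 1 else 0
def Nm (S : Finset V) : Matrix V V ℝ :=
  Matrix.of fun x y => if x ∈ S ∧ y ∈ S ∧ x ≠ y then 1 else 0
def Bm (G : SimpleGraph V) [DecidableRel G.Adj] (S T : Finset V) : Matrix V V ℝ :=
  Matrix.of fun x y => if x ∈ S ∧ y ∈ T ∧ G.Adj x y then 1 else 0
def Bm' (G : SimpleGraph V) [DecidableRel G.Adj] (S T : Finset V) : Matrix V V ℝ :=
  Matrix.of fun x y => if x ∈ S ∧ y ∈ T ∧ ¬ G.Adj x y then 1 else 0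

variable {G : SimpleGraph V} [DecidableRel G.Adj] {S T : Finset V}

@[simp] lemma Dm_apply (S : Finset V) (x y : V) :
    Dm S x y = if x = y ∧ x ∈ S then 1 else 0 := rfl
@[simp] lemma Nm_apply (S : Finset V) (x y : V) :
    Nm S x y = if x ∈ S ∧ y ∈ S ∧ x ≠ y then 1 else 0 := rfl
@[simp] lemma Bm_apply (x y : V) :
    Bm G S T x y = if x ∈ S ∧ y ∈ T ∧ G.Adj x y then 1 else 0 := rfl
@[simp] lemma Bm'_apply (x y : V) :
    Bm' G S T x y = if x ∈ S ∧ y ∈ T ∧ ¬ G.Adj x y then 1 else 0 := rfl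

lemma Dm_transpose (S : Finset V) : (Dm S)ᵀ = Dm S := by
  ext x y; simp only [transpose_apply, Dm_apply]
  refine if_congr ?_ rfl rfl
  constructor
  · rintro ⟨h, hx⟩; exact ⟨h.symm, h ▸ hx⟩
  · rintro ⟨h, hx⟩; exact ⟨h.symm, h ▸ hx⟩
lemma Nm_transpose (S : Finset V) : (Nm S)ᵀ = Nm S := by
  ext x y; simp only [transpose_apply, Nm_apply]
  exact if_congr (by tauto) rfl rfl
lemma Bm_transpose : (Bm G S T)ᵀ = Bm G T S := by
  ext x y; simp only [transpose_apply, Bm_apply]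
  refine if_congr ?_ rfl rfl
  rw [G.adj_comm]; tauto
lemma Bm'_transpose : (Bm' G S T)ᵀ = Bm' G T S := by
  ext x y; simp only [transpose_apply, Bm'_apply, Bm_apply]
  refine if_congr ?_ rfl rfl
  rw [G.adj_comm]; tauto

/-- generic middle-support zero product -/
lemma mid_zero {X Y : Matrix V V ℝ} (U : Finset V)
    (hX : ∀ x z, z ∈ U → X x z = 0) (hY : ∀ z y, z ∉ U → Y z y = 0) : X * Y = 0 := by
  ext x y
  rw [mul_apply]
  refine Finset.sum_eq_zero fun z _ => ?_
  by_cases hz : z ∈ U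
  · rw [hX x z hz, zero_mul]
  · rw [hY z y hz, mul_zero]

lemma Dm_mul {X : Matrix V V ℝ} (hX : ∀ x y, x ∉ S → X x y = 0) : Dm S * X = X := by
  ext x y
  rw [mul_apply]
  rw [Finset.sum_eq_single x]
  · by_cases hx : x ∈ S
    · simp [hx]
    · simp [hx, hX x y hx]
  · intro z _ hz; simp [Ne.symm hz]
  · simp
lemma mul_Dm {X : Matrix V V ℝ} (hX : ∀ x y, y ∉ S → X x y = 0) : X * Dm S = X := by
  ext x y
  rw [mul_apply]
  rw [Finset.sum_eq_single y]
  · by_cases hy : y ∈ S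
    · simp [hy]
    · simp [hy, hX x y hy]
  · intro z _ hz; simp [hz]
  · simp


def Jm (S T : Finset V) : Matrix V V ℝ :=
  Matrix.of fun x y => if x ∈ S ∧ y ∈ T then 1 else 0

lemma sum_ind2 (p q : V → Prop) [DecidablePred p] [DecidablePred q] :
    ∑ z, (if p z then (1:ℝ) else 0) * (if q z then 1 else 0) =
      ((univ : Finset V).filter fun z => p z ∧ q z).card := by
  rw [Finset.sum_congr rfl fun z _ => by rw [ite_zero_mul_ite_zero, one_mul]]
  rw [Finset.sum_boole]

lemma filter_univ_eq (p : V → Prop) [DecidablePred p] (s : Finset V)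
    (h : ∀ z, p z ↔ z ∈ s) : (univ : Finset V).filter p = s := by
  ext z; simp [h]




@[simp] lemma Jm_apply (S T : Finset V) (x y : V) :
    Jm S T x y = if x ∈ S ∧ y ∈ T then 1 else 0 := rfl



lemma BplusB' : Bm G S T + Bm' G S T = Jm S T := by
  ext x y
  simp only [Matrix.add_apply, Bm_apply, Bm'_apply, Jm_apply]
  by_cases ha : G.Adj x y <;> by_cases hx : x ∈ S <;> by_cases hy : y ∈ T <;>
    simp [ha, hx, hy]

lemma PBJ {r : ℕ} (hr : ∀ x ∈ S, (T.filter (fun y => G.Adj x y)).card = r) :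
    Bm G S T * Jm T S = (r:ℝ) • (Dm S + Nm S) := by
  ext x y
  rw [mul_apply]
  simp only [Bm_apply, Jm_apply, Dm_apply, Nm_apply, Matrix.add_apply, Matrix.smul_apply,
    smul_eq_mul]
  rw [sum_ind2]
  by_cases hx : x ∈ S
  · by_cases hy : y ∈ S
    · rw [filter_univ_eq _ (T.filter (fun z => G.Adj x z)) (by
        intro z; simp only [Finset.mem_filter]; tauto), hr x hx]
      by_cases hxy : x = y <;> simp [hx, hy, hxy]
    · rw [filter_univ_eq _ ∅ (by intro z; simp [hy])]
      have : ¬ (x = y ∧ x ∈ S) := fun ⟨h, hxx⟩ => hy (h ▸ hxx)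
      simp [this, hy]
  · rw [filter_univ_eq _ ∅ (by intro z; simp [hx])]
    have : ¬ (x = y ∧ x ∈ S) := fun ⟨_, hxx⟩ => hx hxx
    simp [this, hx]

lemma PJB {r : ℕ} (hr : ∀ y ∈ S, (T.filter (fun z => G.Adj z y)).card = r) :
    Jm S T * Bm G T S = (r:ℝ) • (Dm S + Nm S) := by
  ext x y
  rw [mul_apply]
  simp only [Bm_apply, Jm_apply, Dm_apply, Nm_apply, Matrix.add_apply, Matrix.smul_apply,
    smul_eq_mul]
  rw [sum_ind2]
  by_cases hx : x ∈ S
  · by_cases hy : y ∈ S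
    · rw [filter_univ_eq _ (T.filter (fun z => G.Adj z y)) (by
        intro z; simp only [Finset.mem_filter]; tauto), hr y hy]
      by_cases hxy : x = y <;> simp [hx, hy, hxy]
    · rw [filter_univ_eq _ ∅ (by intro z; simp [hy])]
      have : ¬ (x = y ∧ x ∈ S) := fun ⟨h, hxx⟩ => hy (h ▸ hxx)
      simp [this, hy]
  · rw [filter_univ_eq _ ∅ (by intro z; simp [hx])]
    have : ¬ (x = y ∧ x ∈ S) := fun ⟨_, hxx⟩ => hx hxx
    simp [this, hx]

lemma PJJ : Jm S T * Jm T S = ((T.card : ℝ)) • (Dm S + Nm S) := by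
  ext x y
  rw [mul_apply]
  simp only [Jm_apply, Dm_apply, Nm_apply, Matrix.add_apply, Matrix.smul_apply, smul_eq_mul]
  rw [sum_ind2]
  by_cases hx : x ∈ S
  · by_cases hy : y ∈ S
    · rw [filter_univ_eq _ T (by intro z; simp [hx, hy])]
      by_cases hxy : x = y <;> simp [hx, hy, hxy]
    · rw [filter_univ_eq _ ∅ (by intro z; simp [hy])]
      have : ¬ (x = y ∧ x ∈ S) := fun ⟨h, hxx⟩ => hy (h ▸ hxx)
      simp [this, hy]
  · rw [filter_univ_eq _ ∅ (by intro z; simp [hx])]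
    have : ¬ (x = y ∧ x ∈ S) := fun ⟨_, hxx⟩ => hx hxx
    simp [this, hx]

lemma Jm_transpose (S T : Finset V) : (Jm S T)ᵀ = Jm T S := by
  ext x y
  simp only [transpose_apply, Jm_apply]
  exact if_congr (by tauto) rfl rfl

/-- The key spectral product lemma. -/
lemma PBC {r : ℕ} {e κ : ℝ}
    (hcov : S ∪ T = univ) (hdisj : Disjoint S T)
    (hr : ∀ x ∈ S, (T.filter (fun y => G.Adj x y)).card = r)
    (he : ∀ x ∈ S, ∀ y ∈ S, G.adjMatrix ℝ x y = if x = y then 0 else e)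
    (hA2 : ∀ x ∈ S, ∀ y ∈ S, x ≠ y →
      ∑ z, G.adjMatrix ℝ x z * G.adjMatrix ℝ z y = κ) :
    ∃ μ : ℝ, Bm G S T * Bm G T S = (r:ℝ) • Dm S + μ • Nm S := by
  refine ⟨κ - e * e * ((S.card : ℝ) - 2), ?_⟩
  ext x y
  rw [mul_apply]
  simp only [Bm_apply, Dm_apply, Nm_apply, Matrix.add_apply, Matrix.smul_apply, smul_eq_mul]
  by_cases hx : x ∈ S
  · by_cases hy : y ∈ S
    · by_cases hxy : x = y
      · subst hxy
        rw [sum_ind2, filter_univ_eq _ (T.filter (fun z => G.Adj x z)) (by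
          intro z
          simp only [Finset.mem_filter]
          constructor
          · rintro ⟨⟨_, hz, ha⟩, _⟩; exact ⟨hz, ha⟩
          · rintro ⟨hz, ha⟩; exact ⟨⟨hx, hz, ha⟩, hz, hx, ha.symm⟩), hr x hx]
        simp [hx]
      · -- off-diagonal entry
        have hsplitsum : ∀ f : V → ℝ, ∑ z, f z = ∑ z ∈ S, f z + ∑ z ∈ T, f z := by
          intro f
          rw [← Finset.sum_union hdisj, hcov]
        have hTsum : ∑ z ∈ T, G.adjMatrix ℝ x z * G.adjMatrix ℝ z y =
            ∑ z, (if x ∈ S ∧ z ∈ T ∧ G.Adj x z then (1:ℝ) else 0) *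
              (if z ∈ T ∧ y ∈ S ∧ G.Adj z y then 1 else 0) := by
          rw [hsplitsum]
          have hS0 : ∑ z ∈ S, (if x ∈ S ∧ z ∈ T ∧ G.Adj x z then (1:ℝ) else 0) *
              (if z ∈ T ∧ y ∈ S ∧ G.Adj z y then 1 else 0) = 0 := by
            refine Finset.sum_eq_zero fun z hz => ?_
            have : z ∉ T := Finset.disjoint_left.1 hdisj hz
            simp [this]
          rw [hS0, zero_add]
          refine Finset.sum_congr rfl fun z hz => ?_
          simp [SimpleGraph.adjMatrix_apply, hx, hy, hz]
        have hSsum : ∑ z ∈ S, G.adjMatrix ℝ x z * G.adjMatrix ℝ z y =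
            e * e * ((S.card : ℝ) - 2) := by
          have hterm : ∀ z ∈ S, G.adjMatrix ℝ x z * G.adjMatrix ℝ z y =
              e * e - ((if z = x then e * e else 0) + (if z = y then e * e else 0)) := by
            intro z hz
            rw [he x hx z hz, he z hz y hy]
            by_cases hzx : z = x
            · subst hzx
              rw [if_pos rfl, zero_mul, if_pos rfl, if_neg hxy]; ring
            · by_cases hzy : z = y
              · subst hzy
                rw [if_neg hxy, if_pos rfl, mul_zero, if_neg (fun h => hxy h.symm),
                  if_pos rfl]; ring
              · rw [if_neg (fun h => hzx h.symm), if_neg hzy, if_neg hzx, if_neg hzy]; ring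
          rw [Finset.sum_congr rfl hterm, Finset.sum_sub_distrib, Finset.sum_add_distrib,
            Finset.sum_ite_eq' S x (fun _ => e * e), Finset.sum_ite_eq' S y (fun _ => e * e),
            if_pos hx, if_pos hy, Finset.sum_const]
          push_cast
          ring
        have htotal := hA2 x hx y hy hxy
        rw [hsplitsum, hSsum] at htotal
        have : ∑ z, (if x ∈ S ∧ z ∈ T ∧ G.Adj x z then (1:ℝ) else 0) *
            (if z ∈ T ∧ y ∈ S ∧ G.Adj z y then 1 else 0) =
            κ - e * e * ((S.card : ℝ) - 2) := by
          rw [← hTsum]; linarith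
        rw [this]
        simp [hx, hy, hxy]
    · rw [Finset.sum_eq_zero (fun z _ => by simp [hy])]
      have : ¬ (x = y ∧ x ∈ S) := fun ⟨h, hxx⟩ => hy (h ▸ hxx)
      simp [this, hy]
  · rw [Finset.sum_eq_zero (fun z _ => by simp [hx])]
    have : ¬ (x = y ∧ x ∈ S) := fun ⟨_, hxx⟩ => hx hxx
    simp [this, hx]








lemma PNN (S : Finset V) :
    Nm S * Nm S = ((S.card : ℝ) - 1) • Dm S + ((S.card : ℝ) - 2) • Nm S := by
  ext x y
  rw [mul_apply]
  simp only [Nm_apply, Dm_apply, Matrix.add_apply, Matrix.smul_apply, smul_eq_mul]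
  rw [sum_ind2]
  by_cases hx : x ∈ S
  · by_cases hy : y ∈ S
    · by_cases hxy : x = y
      · subst hxy
        rw [filter_univ_eq _ (S.erase x) (by
          intro z
          simp only [Finset.mem_erase]
          constructor
          · rintro ⟨⟨_, hz, hne⟩, _⟩; exact ⟨Ne.symm hne, hz⟩
          · rintro ⟨hne, hz⟩; exact ⟨⟨hx, hz, Ne.symm hne⟩, hz, hx, hne⟩)]
        rw [Finset.card_erase_of_mem hx,
          Nat.cast_sub (Finset.card_pos.2 ⟨x, hx⟩)]
        simp [hx]
      · rw [filter_univ_eq _ ((S.erase x).erase y) (by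
          intro z
          simp only [Finset.mem_erase]
          constructor
          · rintro ⟨⟨_, hz, hne⟩, _, _, hne'⟩; exact ⟨hne', Ne.symm hne, hz⟩
          · rintro ⟨hne', hne, hz⟩; exact ⟨⟨hx, hz, Ne.symm hne⟩, hz, hy, hne'⟩)]
        have hyx : y ∈ S.erase x := Finset.mem_erase.2 ⟨Ne.symm hxy, hy⟩
        have h2 : 2 ≤ S.card := Finset.one_lt_card.2 ⟨x, hx, y, hy, hxy⟩
        rw [Finset.card_erase_of_mem hyx, Finset.card_erase_of_mem hx,
          Nat.sub_sub, Nat.cast_sub h2]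
        simp [hx, hy, hxy]
    · rw [filter_univ_eq _ ∅ (by intro z; simp [hy])]
      have : ¬ (x = y ∧ x ∈ S) := fun ⟨h, hxx⟩ => hy (h ▸ hxx)
      simp [this, hy]
  · rw [filter_univ_eq _ ∅ (by intro z; simp [hx])]
    have : ¬ (x = y ∧ x ∈ S) := fun ⟨_, hxx⟩ => hx hxx
    simp [this, hx]

lemma PNB {c : ℕ} (hc : ∀ y ∈ T, (S.filter (fun x => G.Adj x y)).card = c) :
    Nm S * Bm G S T = ((c:ℝ) - 1) • Bm G S T + (c:ℝ) • Bm' G S T := by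
  ext x y
  rw [mul_apply]
  simp only [Nm_apply, Bm_apply, Bm'_apply, Matrix.add_apply, Matrix.smul_apply, smul_eq_mul]
  rw [sum_ind2]
  by_cases hx : x ∈ S
  · by_cases hy : y ∈ T
    · rw [filter_univ_eq _ ((S.filter (fun a => G.Adj a y)).erase x) (by
        intro z
        simp only [Finset.mem_erase, Finset.mem_filter]
        constructor
        · rintro ⟨⟨_, hz, hne⟩, _, _, ha⟩; exact ⟨Ne.symm hne, hz, ha⟩
        · rintro ⟨hne, hz, ha⟩; exact ⟨⟨hx, hz, Ne.symm hne⟩, hz, hy, ha⟩)]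
      by_cases hadj : G.Adj x y
      · have hxf : x ∈ S.filter (fun a => G.Adj a y) := Finset.mem_filter.2 ⟨hx, hadj⟩
        rw [Finset.card_erase_of_mem hxf, hc y hy,
          Nat.cast_sub (by rw [← hc y hy]; exact Finset.card_pos.2 ⟨x, hxf⟩)]
        simp [hx, hy, hadj]
      · rw [Finset.erase_eq_of_notMem (by simp [hadj]), hc y hy]
        simp [hx, hy, hadj]
    · rw [filter_univ_eq _ ∅ (by intro z; simp [hy])]
      simp [hy]
  · rw [filter_univ_eq _ ∅ (by intro z; simp [hx])]
    simp [hx]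

lemma PNB' {c : ℕ} (hc : ∀ y ∈ T, (S.filter (fun x => G.Adj x y)).card = c) :
    Nm S * Bm' G S T = ((S.card : ℝ) - c) • Bm G S T + ((S.card : ℝ) - c - 1) • Bm' G S T := by
  ext x y
  rw [mul_apply]
  simp only [Nm_apply, Bm_apply, Bm'_apply, Matrix.add_apply, Matrix.smul_apply, smul_eq_mul]
  rw [sum_ind2]
  by_cases hx : x ∈ S
  · by_cases hy : y ∈ T
    · rw [filter_univ_eq _ ((S.filter (fun a => ¬ G.Adj a y)).erase x) (by
        intro z
        simp only [Finset.mem_erase, Finset.mem_filter]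
        constructor
        · rintro ⟨⟨_, hz, hne⟩, _, _, ha⟩; exact ⟨Ne.symm hne, hz, ha⟩
        · rintro ⟨hne, hz, ha⟩; exact ⟨⟨hx, hz, Ne.symm hne⟩, hz, hy, ha⟩)]
      have hsplit := Finset.card_filter_add_card_filter_not
        (s := S) (p := fun a => G.Adj a y)
      have hcc : c ≤ S.card := by
        rw [← hc y hy]; exact Finset.card_filter_le _ _
      rw [hc y hy] at hsplit
      have hnc : (S.filter (fun a => ¬ G.Adj a y)).card = S.card - c := by
        omega
      by_cases hadj : G.Adj x y
      · rw [Finset.erase_eq_of_notMem (by simp [hadj]), hnc, Nat.cast_sub hcc]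
        simp [hx, hy, hadj]
      · have hxf : x ∈ S.filter (fun a => ¬ G.Adj a y) := Finset.mem_filter.2 ⟨hx, hadj⟩
        have h1 : 1 ≤ S.card - c := by
          have := Finset.card_pos.2 ⟨x, hxf⟩; omega
        rw [Finset.card_erase_of_mem hxf, hnc, Nat.cast_sub h1, Nat.cast_sub hcc]
        simp [hx, hy, hadj]
    · rw [filter_univ_eq _ ∅ (by intro z; simp [hy])]
      simp [hy]
  · rw [filter_univ_eq _ ∅ (by intro z; simp [hx])]
    simp [hx]


lemma zo (P : Prop) [Decidable P] : (if P then (1:ℝ) else 0) = 0 ∨ (if P then (1:ℝ) else 0) = 1 := by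
  split
  · right; rfl
  · left; rfl

def fam (G : SimpleGraph V) [DecidableRel G.Adj] (S T : Finset V) : Fin 8 → Matrix V V ℝ :=
  ![Dm S, Dm T, Nm S, Nm T, Bm G S T, Bm' G S T, Bm G T S, Bm' G T S]

variable {V : Type} [Fintype V] [DecidableEq V]
variable (G : SimpleGraph V) [DecidableRel G.Adj]

lemma adj_isHermitian : (G.adjMatrix ℝ).IsHermitian := by
  refine Matrix.IsHermitian.ext fun i j => ?_
  simp [SimpleGraph.adjMatrix_apply, G.adj_comm i j]

lemma annihilator (θ0 θ1 θ2 : ℝ)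
    (hspec : ∀ θ, adjEig G θ → θ = θ0 ∨ θ = θ1 ∨ θ = θ2) :
    (G.adjMatrix ℝ - θ0 • 1) * ((G.adjMatrix ℝ - θ1 • 1) * (G.adjMatrix ℝ - θ2 • 1)) = 0 := by
  set A := G.adjMatrix ℝ with hA
  have hherm : A.IsHermitian := adj_isHermitian G
  set b := hherm.eigenvectorBasis with hb
  have key : ∀ j : V, ((A - θ0 • 1) * ((A - θ1 • 1) * (A - θ2 • 1))) *ᵥ ⇑(b j) = 0 := by
    intro j
    have hbe : A *ᵥ ⇑(b j) = hherm.eigenvalues j • ⇑(b j) := hherm.mulVec_eigenvectorBasis j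
    have hstep : ∀ c : ℝ, (A - c • 1) *ᵥ ⇑(b j) = (hherm.eigenvalues j - c) • ⇑(b j) := by
      intro c
      rw [Matrix.sub_mulVec, hbe, Matrix.smul_mulVec, Matrix.one_mulVec, sub_smul]
    have heig : adjEig G (hherm.eigenvalues j) :=
      ⟨⇑(b j), by
        have := hherm.eigenvectorBasis.orthonormal.ne_zero j
        rw [hb]
        intro hcon
        apply this
        ext k
        exact congrFun hcon k, hbe⟩
    have hmem := hspec _ heig
    rw [← Matrix.mulVec_mulVec, ← Matrix.mulVec_mulVec]
    simp only [Matrix.mulVec_smul, hstep]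
    rw [smul_smul, smul_smul]
    have hzero : (hherm.eigenvalues j - θ2) * (hherm.eigenvalues j - θ1) *
        (hherm.eigenvalues j - θ0) = 0 := by
      rcases hmem with h | h | h <;> rw [h] <;> ring
    rw [hzero, zero_smul]
  -- conclude the matrix is zero
  set T := (A - θ0 • 1) * ((A - θ1 • 1) * (A - θ2 • 1)) with hT
  have hlin : T.mulVecLin = 0 := by
    apply (hherm.eigenvectorBasis.toBasis.map (WithLp.linearEquiv 2 ℝ (V → ℝ))).ext
    intro j
    simp only [Matrix.mulVecLin_apply, LinearMap.zero_apply, OrthonormalBasis.coe_toBasis,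
      Module.Basis.map_apply, WithLp.linearEquiv_apply]
    exact key j
  have := congrArg Matrix.mulVecLin hT
  ext x y
  have h0 : T *ᵥ (Pi.single y 1) = 0 := by
    rw [← Matrix.mulVecLin_apply, hlin]; rfl
  have := congrFun h0 x
  rw [Matrix.mulVec_single] at this
  simpa using this

lemma walk_zero (θ : ℝ) (h : V → ℝ) (hnn : ∀ x, 0 ≤ h x)
    (heig : G.adjMatrix ℝ *ᵥ h = θ • h) {x y : V} (w : G.Walk x y) (hx : h x = 0) :
    h y = 0 := by
  induction w with
  | nil => exact hx
  | @cons u v t hadj p ih =>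
    apply ih
    have hu : (G.adjMatrix ℝ *ᵥ h) u = 0 := by
      rw [heig]; simp [hx]
    rw [SimpleGraph.adjMatrix_mulVec_apply] at hu
    have := (Finset.sum_eq_zero_iff_of_nonneg (fun z _ => hnn z)).1 hu
    exact this v (by simp [SimpleGraph.mem_neighborFinset, hadj])


variable {V : Type} [Fintype V] [DecidableEq V]
variable (G : SimpleGraph V) [DecidableRel G.Adj]



lemma walk_cross (V1 V2 : Finset V) (hmem : ∀ z : V, z ∈ V1 ∨ z ∈ V2)
    (hdisj : Disjoint V1 V2) {x y : V} (w : G.Walk x y) :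
    x ∈ V1 → y ∈ V2 → ∃ a ∈ V1, ∃ b ∈ V2, G.Adj a b := by
  induction w with
  | nil => intro hx hy; exact absurd hy (Finset.disjoint_left.1 hdisj hx)
  | @cons u v t hadj p ih =>
    intro hx hy
    rcases hmem v with hv | hv
    · exact ih hv hy
    · exact ⟨u, hx, v, hv, hadj⟩

lemma kappa_exists (θ0 θ1 θ2 : ℝ) (hconn : G.Connected)
    (h01 : θ1 < θ0) (h12 : θ2 < θ1)
    (hspec : {θ : ℝ | adjEig G θ} = {θ0, θ1, θ2})
    (V1 V2 : Finset V) (hV1 : V1.Nonempty) (hV2 : V2.Nonempty)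
    (hdisj : Disjoint V1 V2) (hcover : V1 ∪ V2 = univ)
    (r c : ℕ) (hr : ∀ x ∈ V1, (V2.filter (fun y => G.Adj x y)).card = r)
    (hc : ∀ y ∈ V2, (V1.filter (fun x => G.Adj x y)).card = c)
    (e1 e2 : ℝ)
    (he1 : ∀ x ∈ V1, ∀ y ∈ V1, G.adjMatrix ℝ x y = if x = y then 0 else e1)
    (he2 : ∀ x ∈ V2, ∀ y ∈ V2, G.adjMatrix ℝ x y = if x = y then 0 else e2) :
    (∃ κ1 : ℝ, ∀ x ∈ V1, ∀ y ∈ V1, x ≠ y →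
        ∑ z, G.adjMatrix ℝ x z * G.adjMatrix ℝ z y = κ1) ∧
    (∃ κ2 : ℝ, ∀ x ∈ V2, ∀ y ∈ V2, x ≠ y →
        ∑ z, G.adjMatrix ℝ x z * G.adjMatrix ℝ z y = κ2) := by
  set A := G.adjMatrix ℝ with hAdef
  have hAapp : ∀ x y, A x y = if G.Adj x y then (1:ℝ) else 0 := fun x y => by
    rw [hAdef]; simp [SimpleGraph.adjMatrix_apply]
  have hmem : ∀ z : V, z ∈ V1 ∨ z ∈ V2 := fun z => by
    have := Finset.mem_univ z
    rw [← hcover] at this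
    exact Finset.mem_union.1 this
  have hnot2 : ∀ z ∈ V2, z ∉ V1 := fun z hz => Finset.disjoint_right.1 hdisj hz
  have hspec' : ∀ θ, adjEig G θ → θ = θ0 ∨ θ = θ1 ∨ θ = θ2 := by
    intro θ hθ
    have : θ ∈ ({θ0, θ1, θ2} : Set ℝ) := by rw [← hspec]; exact hθ
    simpa using this
  obtain ⟨x1, hx1⟩ := hV1
  obtain ⟨y2, hy2⟩ := hV2
  -- a cross edge exists
  obtain ⟨a, ha, b, hb, hab⟩ : ∃ a ∈ V1, ∃ b ∈ V2, G.Adj a b := by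
    exact (hconn.preconnected x1 y2).elim fun w =>
      walk_cross G V1 V2 hmem hdisj w hx1 hy2
  have hr1 : 0 < r := by
    rw [← hr a ha]
    exact Finset.card_pos.2 ⟨b, Finset.mem_filter.2 ⟨hb, hab⟩⟩
  have hc1 : 0 < c := by
    rw [← hc b hb]
    exact Finset.card_pos.2 ⟨a, Finset.mem_filter.2 ⟨ha, hab⟩⟩
  set n1 := V1.card with hn1
  set n2 := V2.card with hn2
  set a1 : ℝ := e1 * ((n1 : ℝ) - 1) with ha1
  set a2 : ℝ := e2 * ((n2 : ℝ) - 1) with ha2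
  have hX0 : (0:ℝ) ≤ (a1 - a2)^2 + 4 * (r:ℝ) * (c:ℝ) := by positivity
  obtain ⟨q, hq⟩ : ∃ q : ℝ, q = Real.sqrt ((a1 - a2)^2 + 4 * (r:ℝ) * (c:ℝ)) := ⟨_, rfl⟩
  have hq2 : q * q = (a1 - a2)^2 + 4 * (r:ℝ) * (c:ℝ) := by
    rw [hq]; exact Real.mul_self_sqrt hX0
  have hqgt : |a1 - a2| < q := by
    rw [hq, ← Real.sqrt_sq_eq_abs]
    apply Real.sqrt_lt_sqrt (sq_nonneg _)
    have : (0:ℝ) < 4 * (r:ℝ) * (c:ℝ) := by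
      have hr' : (0:ℝ) < r := by exact_mod_cast hr1
      have hc' : (0:ℝ) < c := by exact_mod_cast hc1
      positivity
    linarith
  obtain ⟨lam, hlam⟩ : ∃ lam : ℝ, lam = (a1 + a2 + q) / 2 := ⟨_, rfl⟩
  obtain ⟨s, hs⟩ : ∃ s : ℝ, s = (r : ℝ) := ⟨_, rfl⟩
  obtain ⟨t, ht⟩ : ∃ t : ℝ, t = lam - a1 := ⟨_, rfl⟩
  have hs0 : 0 < s := by rw [hs]; exact_mod_cast hr1
  have ht0 : 0 < t := by
    have h1 : a1 - a2 ≤ |a1 - a2| := le_abs_self _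
    rw [ht, hlam]; linarith
  have hquad : lam * lam - (a1 + a2) * lam + (a1 * a2 - (r:ℝ) * (c:ℝ)) = 0 := by
    rw [hlam]; linear_combination hq2 / 4
  obtain ⟨g, hg⟩ : ∃ g : V → ℝ, g = fun z => if z ∈ V1 then s else t := ⟨_, rfl⟩
  have hgpos : ∀ z, 0 < g z := by
    intro z; rw [hg]; dsimp only
    split
    · exact hs0
    · exact ht0
  have hsplitsum : ∀ f : V → ℝ, ∑ z, f z = ∑ z ∈ V1, f z + ∑ z ∈ V2, f z := by
    intro f; rw [← Finset.sum_union hdisj, hcover]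
  -- inner-count : sum over V1 of A z w for z in V1
  have hinner : ∀ S : Finset V, ∀ e : ℝ,
      (∀ x ∈ S, ∀ y ∈ S, A x y = if x = y then 0 else e) →
      ∀ z ∈ S, ∑ w ∈ S, A z w = e * ((S.card : ℝ) - 1) := by
    intro S e he z hz
    have hterm : ∀ w ∈ S, A z w = e - (if w = z then e else 0) := by
      intro w hw
      rw [he z hz w hw]
      by_cases hwz : w = z
      · subst hwz; simp
      · rw [if_neg (fun h => hwz h.symm), if_neg hwz, sub_zero]
    rw [Finset.sum_congr rfl hterm, Finset.sum_sub_distrib,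
      Finset.sum_ite_eq' S z (fun _ => e), if_pos hz, Finset.sum_const]
    push_cast; ring
  have houter1 : ∀ z ∈ V1, ∑ w ∈ V2, A z w = (r : ℝ) := by
    intro z hz
    have : ∀ w ∈ V2, A z w = if G.Adj z w then (1:ℝ) else 0 := fun w _ => hAapp z w
    rw [Finset.sum_congr rfl this, Finset.sum_boole, hr z hz]
  have houter2 : ∀ z ∈ V2, ∑ w ∈ V1, A z w = (c : ℝ) := by
    intro z hz
    have h1 : ∀ w ∈ V1, A z w = if G.Adj w z then (1:ℝ) else 0 := fun w _ => by
      rw [hAapp z w]; exact if_congr (G.adj_comm z w) rfl rfl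
    rw [Finset.sum_congr rfl h1, Finset.sum_boole, hc z hz]
  have hAg : A *ᵥ g = lam • g := by
    funext z
    have hmv : (A *ᵥ g) z = ∑ w, A z w * g w := rfl
    have hgsplit : ∑ w, A z w * g w = (∑ w ∈ V1, A z w) * s + (∑ w ∈ V2, A z w) * t := by
      rw [hsplitsum, Finset.sum_mul, Finset.sum_mul]
      congr 1
      · refine Finset.sum_congr rfl fun w hw => ?_
        rw [hg]; simp [hw]
      · refine Finset.sum_congr rfl fun w hw => ?_
        rw [hg]; simp [hnot2 w hw]
    rcases hmem z with hz | hz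
    · rw [hmv, hgsplit, hinner V1 e1 he1 z hz, houter1 z hz]
      have hgz : g z = s := by rw [hg]; simp [hz]
      rw [Pi.smul_apply, hgz, smul_eq_mul, ← ha1]
      rw [hs, ht]; ring
    · rw [hmv, hgsplit, hinner V2 e2 he2 z hz, houter2 z hz]
      have hgz : g z = t := by rw [hg]; simp [hnot2 z hz]
      rw [Pi.smul_apply, hgz, smul_eq_mul, ← ha2]
      have : c * s + a2 * t = lam * t ↔
          lam * lam - (a1 + a2) * lam + (a1 * a2 - (r:ℝ)*(c:ℝ)) = 0 := by
        rw [hs, ht]; constructor <;> intro h <;> nlinarith [h]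
      exact this.2 hquad
  have hgne : g ≠ 0 := by
    intro hcon
    have := congrFun hcon x1
    rw [hg] at this
    simp [hx1] at this
    exact absurd this (ne_of_gt hs0)
  have hlam_le : lam ≤ θ0 := by
    rcases hspec' lam ⟨g, hgne, hAg⟩ with h | h | h <;> linarith
  have hsymA : Aᵀ = A := by rw [hAdef]; simp [SimpleGraph.transpose_adjMatrix]
  -- the absolute-value trick; works for any θ0-eigenvector
  have habs : ∀ f : V → ℝ, A *ᵥ f = θ0 • f →
      (A *ᵥ (fun x => |f x|) = θ0 • (fun x => |f x|)) ∧ (f ≠ 0 → lam = θ0) := by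
    intro f hf
    show (A *ᵥ (fun x => |f x|) = θ0 • (fun x => |f x|)) ∧ (f ≠ 0 → lam = θ0)
    obtain ⟨hv, hhv⟩ : ∃ hv : V → ℝ, hv = fun x => |f x| := ⟨_, rfl⟩
    have hvnn : ∀ x, 0 ≤ hv x := fun x => by simp only [hhv]; exact abs_nonneg _
    have hptw : ∀ x, θ0 * hv x ≤ (A *ᵥ hv) x := by
      intro x
      have h1 : (A *ᵥ hv) x = ∑ u ∈ G.neighborFinset x, hv u := by
        rw [hAdef]; exact SimpleGraph.adjMatrix_mulVec_apply _ _ _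
      have h2 : (A *ᵥ f) x = ∑ u ∈ G.neighborFinset x, f u := by
        rw [hAdef]; exact SimpleGraph.adjMatrix_mulVec_apply _ _ _
      have h3 : θ0 * f x = ∑ u ∈ G.neighborFinset x, f u := by
        rw [← h2, hf]; simp
      calc θ0 * hv x ≤ |θ0 * f x| := by
            simp only [hhv]
            rw [abs_mul]
            exact mul_le_mul_of_nonneg_right (le_abs_self θ0) (abs_nonneg _)
        _ = |∑ u ∈ G.neighborFinset x, f u| := by rw [h3]
        _ ≤ ∑ u ∈ G.neighborFinset x, |f u| := Finset.abs_sum_le_sum_abs _ _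
        _ = (A *ᵥ hv) x := by rw [h1]; simp only [hhv]
    have hdot1 : g ⬝ᵥ (A *ᵥ hv) = lam * (g ⬝ᵥ hv) := by
      rw [Matrix.dotProduct_mulVec, ← hsymA, Matrix.vecMul_transpose, hAg,
        smul_dotProduct, smul_eq_mul]
    have key : ∑ x, g x * ((A *ᵥ hv) x - θ0 * hv x) = (lam - θ0) * ∑ x, g x * hv x := by
      have expand : ∑ x, g x * ((A *ᵥ hv) x - θ0 * hv x) =
          (∑ x, g x * (A *ᵥ hv) x) - θ0 * ∑ x, g x * hv x := by
        rw [Finset.mul_sum]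
        rw [← Finset.sum_sub_distrib]
        refine Finset.sum_congr rfl fun x _ => by ring
      rw [expand]
      have : ∑ x, g x * (A *ᵥ hv) x = lam * ∑ x, g x * hv x := hdot1
      rw [this]; ring
    have htermnn : ∀ x ∈ (univ : Finset V), 0 ≤ g x * ((A *ᵥ hv) x - θ0 * hv x) :=
      fun x _ => mul_nonneg (le_of_lt (hgpos x)) (sub_nonneg.2 (hptw x))
    have hgvnn : 0 ≤ ∑ x, g x * hv x :=
      Finset.sum_nonneg fun x _ => mul_nonneg (le_of_lt (hgpos x)) (hvnn x)
    have hsum0 : ∑ x, g x * ((A *ᵥ hv) x - θ0 * hv x) = 0 := by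
      have hge : 0 ≤ (lam - θ0) * ∑ x, g x * hv x := key ▸ Finset.sum_nonneg htermnn
      have hle : (lam - θ0) * ∑ x, g x * hv x ≤ 0 :=
        mul_nonpos_iff.2 (Or.inr ⟨by linarith, hgvnn⟩)
      rw [key]; linarith
    have heach := (Finset.sum_eq_zero_iff_of_nonneg htermnn).1 hsum0
    constructor
    · rw [← hhv]
      funext x
      have := heach x (Finset.mem_univ x)
      have h0 : (A *ᵥ hv) x - θ0 * hv x = 0 := by
        rcases mul_eq_zero.1 this with h | h
        · exact absurd h (ne_of_gt (hgpos x))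
        · exact h
      have : (A *ᵥ hv) x = θ0 * hv x := by linarith
      rw [this]; simp
    · intro hfne
      obtain ⟨x0, hx0⟩ := Function.ne_iff.1 hfne
      have hpos : 0 < ∑ x, g x * hv x := by
        refine Finset.sum_pos' (fun x _ => mul_nonneg (le_of_lt (hgpos x)) (hvnn x))
          ⟨x0, Finset.mem_univ x0, ?_⟩
        have : 0 < hv x0 := by simp only [hhv]; exact abs_pos.2 hx0
        exact mul_pos (hgpos x0) this
      have := key ▸ hsum0
      have hz : (lam - θ0) * ∑ x, g x * hv x = 0 := by rw [← key]; exact hsum0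
      rcases mul_eq_zero.1 hz with h | h
      · linarith
      · exact absurd h (ne_of_gt hpos)
  -- θ0 is an eigenvalue
  have hθ0eig : adjEig G θ0 := by
    have : θ0 ∈ ({θ0, θ1, θ2} : Set ℝ) := by simp
    rw [← hspec] at this
    exact this
  obtain ⟨f0, hf0ne, hf0⟩ := hθ0eig
  have hlam0 : lam = θ0 := (habs f0 hf0).2 hf0ne
  have hAg0 : A *ᵥ g = θ0 • g := by rw [← hlam0]; exact hAg
  -- uniqueness: a θ0-eigenvector vanishing somewhere is zero
  have huniq : ∀ f : V → ℝ, A *ᵥ f = θ0 • f → (∃ x, f x = 0) → f = 0 := by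
    rintro f hf ⟨x0, hx0⟩
    have habs0 := (habs f hf).1
    funext y
    have : |f y| = 0 := by
      refine (hconn.preconnected x0 y).elim fun w => ?_
      exact walk_zero G θ0 (fun x => |f x|) (fun x => abs_nonneg _) habs0 w (by simp [hx0])
    exact abs_eq_zero.1 this
  -- eigenvectors are constant on parts
  have hconst : ∀ f : V → ℝ, A *ᵥ f = θ0 • f → ∀ x y : V,
      ((x ∈ V1 ∧ y ∈ V1) ∨ (x ∉ V1 ∧ y ∉ V1)) → f x = f y := by
    intro f hf x y hcase
    obtain ⟨f', hf'⟩ : ∃ f' : V → ℝ, f' = fun z => g x * f z - f x * g z := ⟨_, rfl⟩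
    have hf'eig : A *ᵥ f' = θ0 • f' := by
      have hrepr : f' = g x • f - f x • g := by
        funext z; simp only [hf', Pi.sub_apply, Pi.smul_apply, smul_eq_mul]
      rw [hrepr, Matrix.mulVec_sub, Matrix.mulVec_smul, Matrix.mulVec_smul, hf, hAg0]
      funext z
      simp only [Pi.sub_apply, Pi.smul_apply, smul_eq_mul]
      ring
    have hf'0 : f' = 0 := huniq f' hf'eig ⟨x, by simp only [hf']; ring⟩
    have hy0 : g x * f y - f x * g y = 0 := by
      have := congrFun hf'0 y
      simpa [hf'] using this
    have hgxy : g x = g y := by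
      rw [hg]
      rcases hcase with ⟨h1, h2⟩ | ⟨h1, h2⟩ <;> simp [h1, h2]
    have hgyne := (hgpos y).ne'
    apply mul_left_cancel₀ hgyne
    rw [← hgxy]
    linear_combination (-1 : ℝ) * hy0 + f x * hgxy
  -- the quadratic matrix M = (A - θ1)(A - θ2)
  obtain ⟨M, hM⟩ : ∃ M : Matrix V V ℝ,
      M = A * A - (θ1 + θ2) • A + (θ1 * θ2) • (1 : Matrix V V ℝ) := ⟨_, rfl⟩
  have hfact : (A - θ1 • 1) * (A - θ2 • 1) = M := by
    rw [hM, Matrix.sub_mul, Matrix.mul_sub, Matrix.mul_sub, Matrix.mul_smul, Matrix.mul_smul,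
      Matrix.smul_mul, Matrix.mul_one, Matrix.mul_one, Matrix.one_mul]
    module
  have h0 : (A - θ0 • 1) * M = 0 := by
    rw [← hfact]
    exact annihilator G θ0 θ1 θ2 hspec'
  have hAM : A * M = θ0 • M := by
    have hexp : (A - θ0 • 1) * M = A * M - θ0 • M := by
      rw [Matrix.sub_mul, Matrix.smul_mul, Matrix.one_mul]
    rw [hexp] at h0
    exact sub_eq_zero.1 h0
  have hMsymm : Mᵀ = M := by
    rw [hM]
    rw [Matrix.transpose_add, Matrix.transpose_sub, Matrix.transpose_smul, Matrix.transpose_smul,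
      Matrix.transpose_mul, Matrix.transpose_one, hsymA]
  have hsympt : ∀ a b, M a b = M b a := by
    intro a b
    have := congrFun (congrFun hMsymm a) b
    simpa using this.symm
  have hcolM : ∀ y, A *ᵥ (fun x => M x y) = θ0 • (fun x => M x y) := by
    intro y
    funext x
    have h1 : (A *ᵥ fun x => M x y) x = (A * M) x y := by
      rw [Matrix.mul_apply]; rfl
    rw [h1, hAM]
    simp
  have hMblock : ∀ x y x' y' : V, ((x ∈ V1 ∧ x' ∈ V1) ∨ (x ∉ V1 ∧ x' ∉ V1)) →
      ((y ∈ V1 ∧ y' ∈ V1) ∨ (y ∉ V1 ∧ y' ∉ V1)) → M x y = M x' y' := by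
    intro x y x' y' hx hy
    have h1 : M x y = M x' y := hconst (fun z => M z y) (hcolM y) x x' hx
    have h2 : M x' y = M x' y' := by
      rw [hsympt x' y, hsympt x' y']
      exact hconst (fun z => M z x') (hcolM x') y y' hy
    rw [h1, h2]
  have hMent : ∀ x y : V, x ≠ y → M x y =
      (∑ z, A x z * A z y) - (θ1 + θ2) * A x y := by
    intro x y hxy
    rw [hM]
    simp only [Matrix.sub_apply, Matrix.add_apply, Matrix.smul_apply, smul_eq_mul,
      Matrix.mul_apply, Matrix.one_apply, if_neg hxy, mul_zero, add_zero]
  constructor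
  · refine ⟨(θ1 + θ2) * e1 + M x1 x1, ?_⟩
    intro x hx y hy hxy
    have hMxy : M x y = M x1 x1 := hMblock x y x1 x1 (Or.inl ⟨hx, hx1⟩) (Or.inl ⟨hy, hx1⟩)
    have hent := hMent x y hxy
    rw [he1 x hx y hy, if_neg hxy] at hent
    linarith [hent, hMxy]
  · refine ⟨(θ1 + θ2) * e2 + M y2 y2, ?_⟩
    intro x hx y hy hxy
    have hMxy : M x y = M y2 y2 :=
      hMblock x y y2 y2 (Or.inr ⟨hnot2 x hx, hnot2 y2 hy2⟩)
        (Or.inr ⟨hnot2 y hy, hnot2 y2 hy2⟩)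
    have hent := hMent x y hxy
    rw [he2 x hx y hy, if_neg hxy] at hent
    linarith [hent, hMxy]

end Stmt6Aux
end AuxSection

open Stmt6Aux in
set_option maxHeartbeats 4000000 in
/-- If the vertex set of `Γ ∈ 𝒢₃` splits into nonempty parts `V1`, `V2` with each induced
subgraph complete or edgeless and the biadjacency matrix having constant row and column
sums, then the coherent rank of `Γ` is at most `8`. -/
theorem stmt6 {V : Type} [Fintype V] [DecidableEq V] (G : SimpleGraph V) [DecidableRel G.Adj]
    (θ0 θ1 θ2 : ℝ) (h : InG3 G θ0 θ1 θ2)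
    (V1 V2 : Finset V) (hV1 : V1.Nonempty) (hV2 : V2.Nonempty)
    (hdisj : Disjoint V1 V2) (hcover : V1 ∪ V2 = Finset.univ)
    (h1 : (∀ x ∈ V1, ∀ y ∈ V1, x ≠ y → G.Adj x y) ∨ (∀ x ∈ V1, ∀ y ∈ V1, ¬ G.Adj x y))
    (h2 : (∀ x ∈ V2, ∀ y ∈ V2, x ≠ y → G.Adj x y) ∨ (∀ x ∈ V2, ∀ y ∈ V2, ¬ G.Adj x y))
    (hrow : ∃ r : ℕ, ∀ x ∈ V1, (V2.filter (fun y => G.Adj x y)).card = r)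
    (hcol : ∃ c : ℕ, ∀ y ∈ V2, (V1.filter (fun x => G.Adj x y)).card = c) :
    ∃ n ≤ 8, ∃ A : Fin n → Matrix V V ℝ,
      IsCoherentConfig A ∧ SimpleGraph.adjMatrix ℝ G ∈ Submodule.span ℝ (Set.range A) := by
  classical
  obtain ⟨hconn, h01, h12, hspec⟩ := h
  obtain ⟨r, hr⟩ := hrow
  obtain ⟨c, hc⟩ := hcol
  have hmem : ∀ z : V, z ∈ V1 ∨ z ∈ V2 := fun z => by
    have hz := Finset.mem_univ z
    rw [← hcover] at hz
    exact Finset.mem_union.1 hz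
  have hnot1 : ∀ z, z ∈ V1 → z ∉ V2 := fun z hz => Finset.disjoint_left.1 hdisj hz
  have hnot2 : ∀ z, z ∈ V2 → z ∉ V1 := fun z hz => Finset.disjoint_right.1 hdisj hz
  obtain ⟨e1, he1⟩ : ∃ e1 : ℝ,
      ∀ x ∈ V1, ∀ y ∈ V1, G.adjMatrix ℝ x y = if x = y then 0 else e1 := by
    rcases h1 with hcomp | hempt
    · refine ⟨1, fun x hx y hy => ?_⟩
      by_cases hxy : x = y
      · subst hxy; simp
      · simp [SimpleGraph.adjMatrix_apply, hxy, hcomp x hx y hy hxy]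
    · refine ⟨0, fun x hx y hy => ?_⟩
      simp [SimpleGraph.adjMatrix_apply, hempt x hx y hy]
  obtain ⟨e2, he2⟩ : ∃ e2 : ℝ,
      ∀ x ∈ V2, ∀ y ∈ V2, G.adjMatrix ℝ x y = if x = y then 0 else e2 := by
    rcases h2 with hcomp | hempt
    · refine ⟨1, fun x hx y hy => ?_⟩
      by_cases hxy : x = y
      · subst hxy; simp
      · simp [SimpleGraph.adjMatrix_apply, hxy, hcomp x hx y hy hxy]
    · refine ⟨0, fun x hx y hy => ?_⟩
      simp [SimpleGraph.adjMatrix_apply, hempt x hx y hy]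
  have hrcomm : ∀ y ∈ V1, (V2.filter (fun z => G.Adj z y)).card = r := by
    intro y hy
    rw [← hr y hy]
    congr 1
    apply Finset.filter_congr
    intro z _
    rw [G.adj_comm]
  have hccomm : ∀ x ∈ V2, (V1.filter (fun y => G.Adj x y)).card = c := by
    intro x hx
    rw [← hc x hx]
    congr 1
    apply Finset.filter_congr
    intro z _
    rw [G.adj_comm]
  obtain ⟨⟨κ1, hκ1⟩, ⟨κ2, hκ2⟩⟩ := Stmt6Aux.kappa_exists G θ0 θ1 θ2 hconn h01 h12 hspec
    V1 V2 hV1 hV2 hdisj hcover r c hr hc e1 e2 he1 he2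
  have hcov2 : V2 ∪ V1 = Finset.univ := by rw [Finset.union_comm]; exact hcover
  obtain ⟨μ1, eBC1⟩ := Stmt6Aux.PBC hcover hdisj hr he1 hκ1
  obtain ⟨μ2, eBC2⟩ := Stmt6Aux.PBC hcov2 hdisj.symm hccomm he2 hκ2
  -- support facts
  have colv0 : ∀ x z : V, z ∉ V1 → Stmt6Aux.Dm V1 x z = 0 := fun x z hz => by
    rw [Stmt6Aux.Dm_apply]
    exact if_neg (by rintro ⟨rfl, hcon2⟩; exact hz hcon2)
  have colv1 : ∀ x z : V, z ∉ V2 → Stmt6Aux.Dm V2 x z = 0 := fun x z hz => by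
    rw [Stmt6Aux.Dm_apply]
    exact if_neg (by rintro ⟨rfl, hcon2⟩; exact hz hcon2)
  have colv2 : ∀ x z : V, z ∉ V1 → Stmt6Aux.Nm V1 x z = 0 := fun x z hz => by
    rw [Stmt6Aux.Nm_apply]; exact if_neg (fun hcon => hz hcon.2.1)
  have colv3 : ∀ x z : V, z ∉ V2 → Stmt6Aux.Nm V2 x z = 0 := fun x z hz => by
    rw [Stmt6Aux.Nm_apply]; exact if_neg (fun hcon => hz hcon.2.1)
  have colv4 : ∀ x z : V, z ∉ V2 → Stmt6Aux.Bm G V1 V2 x z = 0 := fun x z hz => by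
    rw [Stmt6Aux.Bm_apply]; exact if_neg (fun hcon => hz hcon.2.1)
  have colv5 : ∀ x z : V, z ∉ V2 → Stmt6Aux.Bm' G V1 V2 x z = 0 := fun x z hz => by
    rw [Stmt6Aux.Bm'_apply]; exact if_neg (fun hcon => hz hcon.2.1)
  have colv6 : ∀ x z : V, z ∉ V1 → Stmt6Aux.Bm G V2 V1 x z = 0 := fun x z hz => by
    rw [Stmt6Aux.Bm_apply]; exact if_neg (fun hcon => hz hcon.2.1)
  have colv7 : ∀ x z : V, z ∉ V1 → Stmt6Aux.Bm' G V2 V1 x z = 0 := fun x z hz => by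
    rw [Stmt6Aux.Bm'_apply]; exact if_neg (fun hcon => hz hcon.2.1)
  have rowv0 : ∀ x z : V, x ∉ V1 → Stmt6Aux.Dm V1 x z = 0 := fun x z hx => by
    rw [Stmt6Aux.Dm_apply]; exact if_neg (fun hcon => hx hcon.2)
  have rowv1 : ∀ x z : V, x ∉ V2 → Stmt6Aux.Dm V2 x z = 0 := fun x z hx => by
    rw [Stmt6Aux.Dm_apply]; exact if_neg (fun hcon => hx hcon.2)
  have rowv2 : ∀ x z : V, x ∉ V1 → Stmt6Aux.Nm V1 x z = 0 := fun x z hx => by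
    rw [Stmt6Aux.Nm_apply]; exact if_neg (fun hcon => hx hcon.1)
  have rowv3 : ∀ x z : V, x ∉ V2 → Stmt6Aux.Nm V2 x z = 0 := fun x z hx => by
    rw [Stmt6Aux.Nm_apply]; exact if_neg (fun hcon => hx hcon.1)
  have rowv4 : ∀ x z : V, x ∉ V1 → Stmt6Aux.Bm G V1 V2 x z = 0 := fun x z hx => by
    rw [Stmt6Aux.Bm_apply]; exact if_neg (fun hcon => hx hcon.1)
  have rowv5 : ∀ x z : V, x ∉ V1 → Stmt6Aux.Bm' G V1 V2 x z = 0 := fun x z hx => by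
    rw [Stmt6Aux.Bm'_apply]; exact if_neg (fun hcon => hx hcon.1)
  have rowv6 : ∀ x z : V, x ∉ V2 → Stmt6Aux.Bm G V2 V1 x z = 0 := fun x z hx => by
    rw [Stmt6Aux.Bm_apply]; exact if_neg (fun hcon => hx hcon.1)
  have rowv7 : ∀ x z : V, x ∉ V2 → Stmt6Aux.Bm' G V2 V1 x z = 0 := fun x z hx => by
    rw [Stmt6Aux.Bm'_apply]; exact if_neg (fun hcon => hx hcon.1)
  -- product identities
  have eNB1 := Stmt6Aux.PNB hc
  have eNB1' := Stmt6Aux.PNB' hc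
  have eNB2 := Stmt6Aux.PNB hrcomm
  have eNB2' := Stmt6Aux.PNB' hrcomm
  have eBN2 : Stmt6Aux.Bm G V1 V2 * Stmt6Aux.Nm V2 =
      ((r:ℝ) - 1) • Stmt6Aux.Bm G V1 V2 + (r:ℝ) • Stmt6Aux.Bm' G V1 V2 := by
    have hh := congrArg Matrix.transpose eNB2
    simpa [Matrix.transpose_mul, Matrix.transpose_add, Matrix.transpose_smul,
      Stmt6Aux.Nm_transpose, Stmt6Aux.Bm_transpose, Stmt6Aux.Bm'_transpose] using hh
  have eBN2' : Stmt6Aux.Bm' G V1 V2 * Stmt6Aux.Nm V2 =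
      ((V2.card:ℝ) - (r:ℝ)) • Stmt6Aux.Bm G V1 V2 +
        ((V2.card:ℝ) - (r:ℝ) - 1) • Stmt6Aux.Bm' G V1 V2 := by
    have hh := congrArg Matrix.transpose eNB2'
    simpa [Matrix.transpose_mul, Matrix.transpose_add, Matrix.transpose_smul,
      Stmt6Aux.Nm_transpose, Stmt6Aux.Bm_transpose, Stmt6Aux.Bm'_transpose] using hh
  have eBN1 : Stmt6Aux.Bm G V2 V1 * Stmt6Aux.Nm V1 =
      ((c:ℝ) - 1) • Stmt6Aux.Bm G V2 V1 + (c:ℝ) • Stmt6Aux.Bm' G V2 V1 := by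
    have hh := congrArg Matrix.transpose eNB1
    simpa [Matrix.transpose_mul, Matrix.transpose_add, Matrix.transpose_smul,
      Stmt6Aux.Nm_transpose, Stmt6Aux.Bm_transpose, Stmt6Aux.Bm'_transpose] using hh
  have eBN1' : Stmt6Aux.Bm' G V2 V1 * Stmt6Aux.Nm V1 =
      ((V1.card:ℝ) - (c:ℝ)) • Stmt6Aux.Bm G V2 V1 +
        ((V1.card:ℝ) - (c:ℝ) - 1) • Stmt6Aux.Bm' G V2 V1 := by
    have hh := congrArg Matrix.transpose eNB1'
    simpa [Matrix.transpose_mul, Matrix.transpose_add, Matrix.transpose_smul,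
      Stmt6Aux.Nm_transpose, Stmt6Aux.Bm_transpose, Stmt6Aux.Bm'_transpose] using hh
  have hJ12 : Stmt6Aux.Bm G V1 V2 + Stmt6Aux.Bm' G V1 V2 = Stmt6Aux.Jm V1 V2 :=
    Stmt6Aux.BplusB'
  have hJ21 : Stmt6Aux.Bm G V2 V1 + Stmt6Aux.Bm' G V2 V1 = Stmt6Aux.Jm V2 V1 :=
    Stmt6Aux.BplusB'
  have eBJ1 := Stmt6Aux.PBJ hr
  have eJB1 := Stmt6Aux.PJB hrcomm
  have eJJ1 : Stmt6Aux.Jm V1 V2 * Stmt6Aux.Jm V2 V1 =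
      ((V2.card : ℝ)) • (Stmt6Aux.Dm V1 + Stmt6Aux.Nm V1) := Stmt6Aux.PJJ
  have eBJ2 := Stmt6Aux.PBJ hccomm
  have eJB2 := Stmt6Aux.PJB hc
  have eJJ2 : Stmt6Aux.Jm V2 V1 * Stmt6Aux.Jm V1 V2 =
      ((V1.card : ℝ)) • (Stmt6Aux.Dm V2 + Stmt6Aux.Nm V2) := Stmt6Aux.PJJ
  -- derived equations on the V1 side
  have eBsum1 : Stmt6Aux.Bm G V1 V2 * Stmt6Aux.Bm G V2 V1 +
      Stmt6Aux.Bm G V1 V2 * Stmt6Aux.Bm' G V2 V1 =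
      (r:ℝ) • (Stmt6Aux.Dm V1 + Stmt6Aux.Nm V1) := by
    rw [← mul_add, hJ21]; exact eBJ1
  have eBC1p : Stmt6Aux.Bm G V1 V2 * Stmt6Aux.Bm' G V2 V1 =
      (r:ℝ) • (Stmt6Aux.Dm V1 + Stmt6Aux.Nm V1) -
        ((r:ℝ) • Stmt6Aux.Dm V1 + μ1 • Stmt6Aux.Nm V1) := by
    rw [← eBC1]; exact eq_sub_of_add_eq' eBsum1
  have eBpsum1 : Stmt6Aux.Bm G V1 V2 * Stmt6Aux.Bm G V2 V1 +
      Stmt6Aux.Bm' G V1 V2 * Stmt6Aux.Bm G V2 V1 =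
      (r:ℝ) • (Stmt6Aux.Dm V1 + Stmt6Aux.Nm V1) := by
    rw [← add_mul, hJ12]; exact eJB1
  have eBpC1 : Stmt6Aux.Bm' G V1 V2 * Stmt6Aux.Bm G V2 V1 =
      (r:ℝ) • (Stmt6Aux.Dm V1 + Stmt6Aux.Nm V1) -
        ((r:ℝ) • Stmt6Aux.Dm V1 + μ1 • Stmt6Aux.Nm V1) := by
    rw [← eBC1]; exact eq_sub_of_add_eq' eBpsum1
  have eJJexp1 : Stmt6Aux.Bm G V1 V2 * Stmt6Aux.Bm G V2 V1 +
      Stmt6Aux.Bm' G V1 V2 * Stmt6Aux.Bm G V2 V1 +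
      (Stmt6Aux.Bm G V1 V2 * Stmt6Aux.Bm' G V2 V1 +
        Stmt6Aux.Bm' G V1 V2 * Stmt6Aux.Bm' G V2 V1) =
      ((V2.card : ℝ)) • (Stmt6Aux.Dm V1 + Stmt6Aux.Nm V1) := by
    have hh := eJJ1
    rw [← hJ12, ← hJ21, mul_add, add_mul, add_mul] at hh
    exact hh
  have eBpC1p : Stmt6Aux.Bm' G V1 V2 * Stmt6Aux.Bm' G V2 V1 =
      ((V2.card : ℝ)) • (Stmt6Aux.Dm V1 + Stmt6Aux.Nm V1) -
        Stmt6Aux.Bm G V1 V2 * Stmt6Aux.Bm G V2 V1 -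
        Stmt6Aux.Bm' G V1 V2 * Stmt6Aux.Bm G V2 V1 -
        Stmt6Aux.Bm G V1 V2 * Stmt6Aux.Bm' G V2 V1 := by
    rw [← eJJexp1]; abel
  -- derived equations on the V2 side
  have eBsum2 : Stmt6Aux.Bm G V2 V1 * Stmt6Aux.Bm G V1 V2 +
      Stmt6Aux.Bm G V2 V1 * Stmt6Aux.Bm' G V1 V2 =
      (c:ℝ) • (Stmt6Aux.Dm V2 + Stmt6Aux.Nm V2) := by
    rw [← mul_add, hJ12]; exact eBJ2
  have eBC2p : Stmt6Aux.Bm G V2 V1 * Stmt6Aux.Bm' G V1 V2 =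
      (c:ℝ) • (Stmt6Aux.Dm V2 + Stmt6Aux.Nm V2) -
        ((c:ℝ) • Stmt6Aux.Dm V2 + μ2 • Stmt6Aux.Nm V2) := by
    rw [← eBC2]; exact eq_sub_of_add_eq' eBsum2
  have eBpsum2 : Stmt6Aux.Bm G V2 V1 * Stmt6Aux.Bm G V1 V2 +
      Stmt6Aux.Bm' G V2 V1 * Stmt6Aux.Bm G V1 V2 =
      (c:ℝ) • (Stmt6Aux.Dm V2 + Stmt6Aux.Nm V2) := by
    rw [← add_mul, hJ21]; exact eJB2
  have eBpC2 : Stmt6Aux.Bm' G V2 V1 * Stmt6Aux.Bm G V1 V2 =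
      (c:ℝ) • (Stmt6Aux.Dm V2 + Stmt6Aux.Nm V2) -
        ((c:ℝ) • Stmt6Aux.Dm V2 + μ2 • Stmt6Aux.Nm V2) := by
    rw [← eBC2]; exact eq_sub_of_add_eq' eBpsum2
  have eJJexp2 : Stmt6Aux.Bm G V2 V1 * Stmt6Aux.Bm G V1 V2 +
      Stmt6Aux.Bm' G V2 V1 * Stmt6Aux.Bm G V1 V2 +
      (Stmt6Aux.Bm G V2 V1 * Stmt6Aux.Bm' G V1 V2 +
        Stmt6Aux.Bm' G V2 V1 * Stmt6Aux.Bm' G V1 V2) =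
      ((V1.card : ℝ)) • (Stmt6Aux.Dm V2 + Stmt6Aux.Nm V2) := by
    have hh := eJJ2
    rw [← hJ21, ← hJ12, mul_add, add_mul, add_mul] at hh
    exact hh
  have eBpC2p : Stmt6Aux.Bm' G V2 V1 * Stmt6Aux.Bm' G V1 V2 =
      ((V1.card : ℝ)) • (Stmt6Aux.Dm V2 + Stmt6Aux.Nm V2) -
        Stmt6Aux.Bm G V2 V1 * Stmt6Aux.Bm G V1 V2 -
        Stmt6Aux.Bm' G V2 V1 * Stmt6Aux.Bm G V1 V2 -
        Stmt6Aux.Bm G V2 V1 * Stmt6Aux.Bm' G V1 V2 := by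
    rw [← eJJexp2]; abel
  -- span membership
  have hspan : (∀ i j : Fin 8, Stmt6Aux.fam G V1 V2 i * Stmt6Aux.fam G V1 V2 j ∈
        Submodule.span ℝ (Set.range (Stmt6Aux.fam G V1 V2))) ∧
      SimpleGraph.adjMatrix ℝ G ∈ Submodule.span ℝ (Set.range (Stmt6Aux.fam G V1 V2)) := by
    set sp := Submodule.span ℝ (Set.range (Stmt6Aux.fam G V1 V2)) with hspdef
    have mem8 : ∀ i : Fin 8, Stmt6Aux.fam G V1 V2 i ∈ sp :=
      fun i => Submodule.subset_span ⟨i, rfl⟩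
    have combmem : ∀ (a b : ℝ) (X Y : Matrix V V ℝ), X ∈ sp → Y ∈ sp → a • X + b • Y ∈ sp :=
      fun a b X Y hX hY =>
        Submodule.add_mem _ (Submodule.smul_mem _ _ hX) (Submodule.smul_mem _ _ hY)
    have mBC1 : Stmt6Aux.Bm G V1 V2 * Stmt6Aux.Bm G V2 V1 ∈ sp := by
      rw [eBC1]; exact combmem _ _ _ _ (mem8 0) (mem8 2)
    have mBC1p : Stmt6Aux.Bm G V1 V2 * Stmt6Aux.Bm' G V2 V1 ∈ sp := by
      rw [eBC1p]
      exact Submodule.sub_mem _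
        (Submodule.smul_mem _ _ (Submodule.add_mem _ (mem8 0) (mem8 2)))
        (combmem _ _ _ _ (mem8 0) (mem8 2))
    have mBpC1 : Stmt6Aux.Bm' G V1 V2 * Stmt6Aux.Bm G V2 V1 ∈ sp := by
      rw [eBpC1]
      exact Submodule.sub_mem _
        (Submodule.smul_mem _ _ (Submodule.add_mem _ (mem8 0) (mem8 2)))
        (combmem _ _ _ _ (mem8 0) (mem8 2))
    have mBpC1p : Stmt6Aux.Bm' G V1 V2 * Stmt6Aux.Bm' G V2 V1 ∈ sp := by
      rw [eBpC1p]
      exact Submodule.sub_mem _ (Submodule.sub_mem _ (Submodule.sub_mem _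
        (Submodule.smul_mem _ _ (Submodule.add_mem _ (mem8 0) (mem8 2))) mBC1) mBpC1) mBC1p
    have mBC2 : Stmt6Aux.Bm G V2 V1 * Stmt6Aux.Bm G V1 V2 ∈ sp := by
      rw [eBC2]; exact combmem _ _ _ _ (mem8 1) (mem8 3)
    have mBC2p : Stmt6Aux.Bm G V2 V1 * Stmt6Aux.Bm' G V1 V2 ∈ sp := by
      rw [eBC2p]
      exact Submodule.sub_mem _
        (Submodule.smul_mem _ _ (Submodule.add_mem _ (mem8 1) (mem8 3)))
        (combmem _ _ _ _ (mem8 1) (mem8 3))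
    have mBpC2 : Stmt6Aux.Bm' G V2 V1 * Stmt6Aux.Bm G V1 V2 ∈ sp := by
      rw [eBpC2]
      exact Submodule.sub_mem _
        (Submodule.smul_mem _ _ (Submodule.add_mem _ (mem8 1) (mem8 3)))
        (combmem _ _ _ _ (mem8 1) (mem8 3))
    have mBpC2p : Stmt6Aux.Bm' G V2 V1 * Stmt6Aux.Bm' G V1 V2 ∈ sp := by
      rw [eBpC2p]
      exact Submodule.sub_mem _ (Submodule.sub_mem _ (Submodule.sub_mem _
        (Submodule.smul_mem _ _ (Submodule.add_mem _ (mem8 1) (mem8 3))) mBC2) mBpC2) mBC2p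
    constructor
    · intro i j
      fin_cases i <;> fin_cases j
      · show Stmt6Aux.Dm V1 * Stmt6Aux.Dm V1 ∈ sp
        rw [Stmt6Aux.Dm_mul rowv0]
        exact mem8 0
      · show Stmt6Aux.Dm V1 * Stmt6Aux.Dm V2 ∈ sp
        rw [Stmt6Aux.mid_zero V2 (fun x z hz => colv0 x z (hnot2 z hz)) rowv1]
        exact Submodule.zero_mem _
      · show Stmt6Aux.Dm V1 * Stmt6Aux.Nm V1 ∈ sp
        rw [Stmt6Aux.Dm_mul rowv2]
        exact mem8 2
      · show Stmt6Aux.Dm V1 * Stmt6Aux.Nm V2 ∈ sp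
        rw [Stmt6Aux.mid_zero V2 (fun x z hz => colv0 x z (hnot2 z hz)) rowv3]
        exact Submodule.zero_mem _
      · show Stmt6Aux.Dm V1 * Stmt6Aux.Bm G V1 V2 ∈ sp
        rw [Stmt6Aux.Dm_mul rowv4]
        exact mem8 4
      · show Stmt6Aux.Dm V1 * Stmt6Aux.Bm' G V1 V2 ∈ sp
        rw [Stmt6Aux.Dm_mul rowv5]
        exact mem8 5
      · show Stmt6Aux.Dm V1 * Stmt6Aux.Bm G V2 V1 ∈ sp
        rw [Stmt6Aux.mid_zero V2 (fun x z hz => colv0 x z (hnot2 z hz)) rowv6]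
        exact Submodule.zero_mem _
      · show Stmt6Aux.Dm V1 * Stmt6Aux.Bm' G V2 V1 ∈ sp
        rw [Stmt6Aux.mid_zero V2 (fun x z hz => colv0 x z (hnot2 z hz)) rowv7]
        exact Submodule.zero_mem _
      · show Stmt6Aux.Dm V2 * Stmt6Aux.Dm V1 ∈ sp
        rw [Stmt6Aux.mid_zero V1 (fun x z hz => colv1 x z (hnot1 z hz)) rowv0]
        exact Submodule.zero_mem _
      · show Stmt6Aux.Dm V2 * Stmt6Aux.Dm V2 ∈ sp
        rw [Stmt6Aux.Dm_mul rowv1]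
        exact mem8 1
      · show Stmt6Aux.Dm V2 * Stmt6Aux.Nm V1 ∈ sp
        rw [Stmt6Aux.mid_zero V1 (fun x z hz => colv1 x z (hnot1 z hz)) rowv2]
        exact Submodule.zero_mem _
      · show Stmt6Aux.Dm V2 * Stmt6Aux.Nm V2 ∈ sp
        rw [Stmt6Aux.Dm_mul rowv3]
        exact mem8 3
      · show Stmt6Aux.Dm V2 * Stmt6Aux.Bm G V1 V2 ∈ sp
        rw [Stmt6Aux.mid_zero V1 (fun x z hz => colv1 x z (hnot1 z hz)) rowv4]
        exact Submodule.zero_mem _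
      · show Stmt6Aux.Dm V2 * Stmt6Aux.Bm' G V1 V2 ∈ sp
        rw [Stmt6Aux.mid_zero V1 (fun x z hz => colv1 x z (hnot1 z hz)) rowv5]
        exact Submodule.zero_mem _
      · show Stmt6Aux.Dm V2 * Stmt6Aux.Bm G V2 V1 ∈ sp
        rw [Stmt6Aux.Dm_mul rowv6]
        exact mem8 6
      · show Stmt6Aux.Dm V2 * Stmt6Aux.Bm' G V2 V1 ∈ sp
        rw [Stmt6Aux.Dm_mul rowv7]
        exact mem8 7
      · show Stmt6Aux.Nm V1 * Stmt6Aux.Dm V1 ∈ sp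
        rw [Stmt6Aux.mul_Dm colv2]
        exact mem8 2
      · show Stmt6Aux.Nm V1 * Stmt6Aux.Dm V2 ∈ sp
        rw [Stmt6Aux.mid_zero V2 (fun x z hz => colv2 x z (hnot2 z hz)) rowv1]
        exact Submodule.zero_mem _
      · show Stmt6Aux.Nm V1 * Stmt6Aux.Nm V1 ∈ sp
        rw [Stmt6Aux.PNN V1]
        exact combmem _ _ _ _ (mem8 0) (mem8 2)
      · show Stmt6Aux.Nm V1 * Stmt6Aux.Nm V2 ∈ sp
        rw [Stmt6Aux.mid_zero V2 (fun x z hz => colv2 x z (hnot2 z hz)) rowv3]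
        exact Submodule.zero_mem _
      · show Stmt6Aux.Nm V1 * Stmt6Aux.Bm G V1 V2 ∈ sp
        rw [eNB1]
        exact combmem _ _ _ _ (mem8 4) (mem8 5)
      · show Stmt6Aux.Nm V1 * Stmt6Aux.Bm' G V1 V2 ∈ sp
        rw [eNB1']
        exact combmem _ _ _ _ (mem8 4) (mem8 5)
      · show Stmt6Aux.Nm V1 * Stmt6Aux.Bm G V2 V1 ∈ sp
        rw [Stmt6Aux.mid_zero V2 (fun x z hz => colv2 x z (hnot2 z hz)) rowv6]
        exact Submodule.zero_mem _
      · show Stmt6Aux.Nm V1 * Stmt6Aux.Bm' G V2 V1 ∈ sp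
        rw [Stmt6Aux.mid_zero V2 (fun x z hz => colv2 x z (hnot2 z hz)) rowv7]
        exact Submodule.zero_mem _
      · show Stmt6Aux.Nm V2 * Stmt6Aux.Dm V1 ∈ sp
        rw [Stmt6Aux.mid_zero V1 (fun x z hz => colv3 x z (hnot1 z hz)) rowv0]
        exact Submodule.zero_mem _
      · show Stmt6Aux.Nm V2 * Stmt6Aux.Dm V2 ∈ sp
        rw [Stmt6Aux.mul_Dm colv3]
        exact mem8 3
      · show Stmt6Aux.Nm V2 * Stmt6Aux.Nm V1 ∈ sp
        rw [Stmt6Aux.mid_zero V1 (fun x z hz => colv3 x z (hnot1 z hz)) rowv2]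
        exact Submodule.zero_mem _
      · show Stmt6Aux.Nm V2 * Stmt6Aux.Nm V2 ∈ sp
        rw [Stmt6Aux.PNN V2]
        exact combmem _ _ _ _ (mem8 1) (mem8 3)
      · show Stmt6Aux.Nm V2 * Stmt6Aux.Bm G V1 V2 ∈ sp
        rw [Stmt6Aux.mid_zero V1 (fun x z hz => colv3 x z (hnot1 z hz)) rowv4]
        exact Submodule.zero_mem _
      · show Stmt6Aux.Nm V2 * Stmt6Aux.Bm' G V1 V2 ∈ sp
        rw [Stmt6Aux.mid_zero V1 (fun x z hz => colv3 x z (hnot1 z hz)) rowv5]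
        exact Submodule.zero_mem _
      · show Stmt6Aux.Nm V2 * Stmt6Aux.Bm G V2 V1 ∈ sp
        rw [eNB2]
        exact combmem _ _ _ _ (mem8 6) (mem8 7)
      · show Stmt6Aux.Nm V2 * Stmt6Aux.Bm' G V2 V1 ∈ sp
        rw [eNB2']
        exact combmem _ _ _ _ (mem8 6) (mem8 7)
      · show Stmt6Aux.Bm G V1 V2 * Stmt6Aux.Dm V1 ∈ sp
        rw [Stmt6Aux.mid_zero V1 (fun x z hz => colv4 x z (hnot1 z hz)) rowv0]
        exact Submodule.zero_mem _
      · show Stmt6Aux.Bm G V1 V2 * Stmt6Aux.Dm V2 ∈ sp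
        rw [Stmt6Aux.mul_Dm colv4]
        exact mem8 4
      · show Stmt6Aux.Bm G V1 V2 * Stmt6Aux.Nm V1 ∈ sp
        rw [Stmt6Aux.mid_zero V1 (fun x z hz => colv4 x z (hnot1 z hz)) rowv2]
        exact Submodule.zero_mem _
      · show Stmt6Aux.Bm G V1 V2 * Stmt6Aux.Nm V2 ∈ sp
        rw [eBN2]
        exact combmem _ _ _ _ (mem8 4) (mem8 5)
      · show Stmt6Aux.Bm G V1 V2 * Stmt6Aux.Bm G V1 V2 ∈ sp
        rw [Stmt6Aux.mid_zero V1 (fun x z hz => colv4 x z (hnot1 z hz)) rowv4]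
        exact Submodule.zero_mem _
      · show Stmt6Aux.Bm G V1 V2 * Stmt6Aux.Bm' G V1 V2 ∈ sp
        rw [Stmt6Aux.mid_zero V1 (fun x z hz => colv4 x z (hnot1 z hz)) rowv5]
        exact Submodule.zero_mem _
      · show Stmt6Aux.Bm G V1 V2 * Stmt6Aux.Bm G V2 V1 ∈ sp
        exact mBC1
      · show Stmt6Aux.Bm G V1 V2 * Stmt6Aux.Bm' G V2 V1 ∈ sp
        exact mBC1p
      · show Stmt6Aux.Bm' G V1 V2 * Stmt6Aux.Dm V1 ∈ sp
        rw [Stmt6Aux.mid_zero V1 (fun x z hz => colv5 x z (hnot1 z hz)) rowv0]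
        exact Submodule.zero_mem _
      · show Stmt6Aux.Bm' G V1 V2 * Stmt6Aux.Dm V2 ∈ sp
        rw [Stmt6Aux.mul_Dm colv5]
        exact mem8 5
      · show Stmt6Aux.Bm' G V1 V2 * Stmt6Aux.Nm V1 ∈ sp
        rw [Stmt6Aux.mid_zero V1 (fun x z hz => colv5 x z (hnot1 z hz)) rowv2]
        exact Submodule.zero_mem _
      · show Stmt6Aux.Bm' G V1 V2 * Stmt6Aux.Nm V2 ∈ sp
        rw [eBN2']
        exact combmem _ _ _ _ (mem8 4) (mem8 5)
      · show Stmt6Aux.Bm' G V1 V2 * Stmt6Aux.Bm G V1 V2 ∈ sp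
        rw [Stmt6Aux.mid_zero V1 (fun x z hz => colv5 x z (hnot1 z hz)) rowv4]
        exact Submodule.zero_mem _
      · show Stmt6Aux.Bm' G V1 V2 * Stmt6Aux.Bm' G V1 V2 ∈ sp
        rw [Stmt6Aux.mid_zero V1 (fun x z hz => colv5 x z (hnot1 z hz)) rowv5]
        exact Submodule.zero_mem _
      · show Stmt6Aux.Bm' G V1 V2 * Stmt6Aux.Bm G V2 V1 ∈ sp
        exact mBpC1
      · show Stmt6Aux.Bm' G V1 V2 * Stmt6Aux.Bm' G V2 V1 ∈ sp
        exact mBpC1p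
      · show Stmt6Aux.Bm G V2 V1 * Stmt6Aux.Dm V1 ∈ sp
        rw [Stmt6Aux.mul_Dm colv6]
        exact mem8 6
      · show Stmt6Aux.Bm G V2 V1 * Stmt6Aux.Dm V2 ∈ sp
        rw [Stmt6Aux.mid_zero V2 (fun x z hz => colv6 x z (hnot2 z hz)) rowv1]
        exact Submodule.zero_mem _
      · show Stmt6Aux.Bm G V2 V1 * Stmt6Aux.Nm V1 ∈ sp
        rw [eBN1]
        exact combmem _ _ _ _ (mem8 6) (mem8 7)
      · show Stmt6Aux.Bm G V2 V1 * Stmt6Aux.Nm V2 ∈ sp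
        rw [Stmt6Aux.mid_zero V2 (fun x z hz => colv6 x z (hnot2 z hz)) rowv3]
        exact Submodule.zero_mem _
      · show Stmt6Aux.Bm G V2 V1 * Stmt6Aux.Bm G V1 V2 ∈ sp
        exact mBC2
      · show Stmt6Aux.Bm G V2 V1 * Stmt6Aux.Bm' G V1 V2 ∈ sp
        exact mBC2p
      · show Stmt6Aux.Bm G V2 V1 * Stmt6Aux.Bm G V2 V1 ∈ sp
        rw [Stmt6Aux.mid_zero V2 (fun x z hz => colv6 x z (hnot2 z hz)) rowv6]
        exact Submodule.zero_mem _
      · show Stmt6Aux.Bm G V2 V1 * Stmt6Aux.Bm' G V2 V1 ∈ sp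
        rw [Stmt6Aux.mid_zero V2 (fun x z hz => colv6 x z (hnot2 z hz)) rowv7]
        exact Submodule.zero_mem _
      · show Stmt6Aux.Bm' G V2 V1 * Stmt6Aux.Dm V1 ∈ sp
        rw [Stmt6Aux.mul_Dm colv7]
        exact mem8 7
      · show Stmt6Aux.Bm' G V2 V1 * Stmt6Aux.Dm V2 ∈ sp
        rw [Stmt6Aux.mid_zero V2 (fun x z hz => colv7 x z (hnot2 z hz)) rowv1]
        exact Submodule.zero_mem _
      · show Stmt6Aux.Bm' G V2 V1 * Stmt6Aux.Nm V1 ∈ sp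
        rw [eBN1']
        exact combmem _ _ _ _ (mem8 6) (mem8 7)
      · show Stmt6Aux.Bm' G V2 V1 * Stmt6Aux.Nm V2 ∈ sp
        rw [Stmt6Aux.mid_zero V2 (fun x z hz => colv7 x z (hnot2 z hz)) rowv3]
        exact Submodule.zero_mem _
      · show Stmt6Aux.Bm' G V2 V1 * Stmt6Aux.Bm G V1 V2 ∈ sp
        exact mBpC2
      · show Stmt6Aux.Bm' G V2 V1 * Stmt6Aux.Bm' G V1 V2 ∈ sp
        exact mBpC2p
      · show Stmt6Aux.Bm' G V2 V1 * Stmt6Aux.Bm G V2 V1 ∈ sp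
        rw [Stmt6Aux.mid_zero V2 (fun x z hz => colv7 x z (hnot2 z hz)) rowv6]
        exact Submodule.zero_mem _
      · show Stmt6Aux.Bm' G V2 V1 * Stmt6Aux.Bm' G V2 V1 ∈ sp
        rw [Stmt6Aux.mid_zero V2 (fun x z hz => colv7 x z (hnot2 z hz)) rowv7]
        exact Submodule.zero_mem _
    · -- adjacency matrix in span
      have eA : G.adjMatrix ℝ = e1 • Stmt6Aux.Nm V1 + e2 • Stmt6Aux.Nm V2 +
          Stmt6Aux.Bm G V1 V2 + Stmt6Aux.Bm G V2 V1 := by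
        ext x y
        simp only [Matrix.add_apply, Matrix.smul_apply, smul_eq_mul, Stmt6Aux.Nm_apply,
          Stmt6Aux.Bm_apply]
        rcases hmem x with hx | hx <;> rcases hmem y with hy | hy
        · have hx2 := hnot1 x hx
          have hy2 := hnot1 y hy
          rw [he1 x hx y hy]
          by_cases hxy : x = y <;> simp [hx, hy, hx2, hy2, hxy]
        · have hx2 := hnot1 x hx
          have hy1 := hnot2 y hy
          have hxy : x ≠ y := fun hh => hy1 (hh ▸ hx)
          by_cases hadj : G.Adj x y <;>
            simp [SimpleGraph.adjMatrix_apply, hx, hy, hx2, hy1, hxy, hadj]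
        · have hx1 := hnot2 x hx
          have hy2 := hnot1 y hy
          have hxy : x ≠ y := fun hh => hx1 (hh ▸ hy)
          by_cases hadj : G.Adj x y <;>
            simp [SimpleGraph.adjMatrix_apply, hx, hy, hx1, hy2, hxy, hadj]
        · have hx1 := hnot2 x hx
          have hy1 := hnot2 y hy
          rw [he2 x hx y hy]
          by_cases hxy : x = y <;> simp [hx, hy, hx1, hy1, hxy]
      rw [eA]
      exact Submodule.add_mem _ (Submodule.add_mem _
        (combmem _ _ _ _ (mem8 2) (mem8 3)) (mem8 4)) (mem8 6)
  refine ⟨8, le_refl 8, Stmt6Aux.fam G V1 V2, ⟨?_, ?_, ?_, ?_, hspan.1⟩, hspan.2⟩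
  · -- 0/1 entries
    intro i x y
    fin_cases i
    · exact Stmt6Aux.zo _
    · exact Stmt6Aux.zo _
    · exact Stmt6Aux.zo _
    · exact Stmt6Aux.zo _
    · exact Stmt6Aux.zo _
    · exact Stmt6Aux.zo _
    · exact Stmt6Aux.zo _
    · exact Stmt6Aux.zo _
  · -- sum of all is J
    rw [show (∑ i, Stmt6Aux.fam G V1 V2 i) = Stmt6Aux.Dm V1 + Stmt6Aux.Dm V2 +
        Stmt6Aux.Nm V1 + Stmt6Aux.Nm V2 + Stmt6Aux.Bm G V1 V2 + Stmt6Aux.Bm' G V1 V2 +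
        Stmt6Aux.Bm G V2 V1 + Stmt6Aux.Bm' G V2 V1 from by rw [Fin.sum_univ_eight]; rfl]
    ext x y
    simp only [Matrix.add_apply, Stmt6Aux.Dm_apply, Stmt6Aux.Nm_apply, Stmt6Aux.Bm_apply,
      Stmt6Aux.Bm'_apply, Matrix.of_apply]
    rcases hmem x with hx | hx <;> rcases hmem y with hy | hy
    · have hx2 := hnot1 x hx
      have hy2 := hnot1 y hy
      by_cases hxy : x = y <;> simp [hx, hy, hx2, hy2, hxy]
    · have hx2 := hnot1 x hx
      have hy1 := hnot2 y hy
      have hxy : x ≠ y := fun hh => hy1 (hh ▸ hx)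
      by_cases hadj : G.Adj x y <;> simp [hx, hy, hx2, hy1, hxy, hadj]
    · have hx1 := hnot2 x hx
      have hy2 := hnot1 y hy
      have hxy : x ≠ y := fun hh => hx1 (hh ▸ hy)
      by_cases hadj : G.Adj x y <;> simp [hx, hy, hx1, hy2, hxy, hadj]
    · have hx1 := hnot2 x hx
      have hy1 := hnot2 y hy
      by_cases hxy : x = y <;> simp [hx, hy, hx1, hy1, hxy]
  · -- transposes
    intro i
    fin_cases i
    · exact ⟨0, Stmt6Aux.Dm_transpose V1⟩
    · exact ⟨1, Stmt6Aux.Dm_transpose V2⟩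
    · exact ⟨2, Stmt6Aux.Nm_transpose V1⟩
    · exact ⟨3, Stmt6Aux.Nm_transpose V2⟩
    · exact ⟨6, Stmt6Aux.Bm_transpose⟩
    · exact ⟨7, Stmt6Aux.Bm'_transpose⟩
    · exact ⟨4, Stmt6Aux.Bm_transpose⟩
    · exact ⟨5, Stmt6Aux.Bm'_transpose⟩
  · -- identity
    refine ⟨{0, 1}, ?_⟩
    rw [show (∑ i ∈ ({0, 1} : Finset (Fin 8)), Stmt6Aux.fam G V1 V2 i) =
        Stmt6Aux.Dm V1 + Stmt6Aux.Dm V2 from by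
      rw [Finset.sum_pair (by decide : (0 : Fin 8) ≠ 1)]; rfl]
    ext x y
    simp only [Matrix.add_apply, Stmt6Aux.Dm_apply, Matrix.one_apply]
    rcases hmem x with hx | hx
    · have hx2 := hnot1 x hx
      by_cases hxy : x = y
      · subst hxy; simp [hx, hx2]
      · simp [hxy]
    · have hx1 := hnot2 x hx
      by_cases hxy : x = y
      · subst hxy; simp [hx, hx1]
      · simp [hxy]
end
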